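/- arXiv:math/0111290 — 5 statements merged into one kernel-verified Lean document; each statement's English description precedes it below -/
import Mathlib

section
/- Let D' : Ω → Ω be an ℝ-linear operator that raises form degree by exactly 1 and raises total degree by at least 1, and suppose D₀ := −δ + D' satisfies D₀² = 0. If σ ∈ Ω⁰ = ℝ[[y¹,…,y^d]] is a 0-form with D₀σ = 0, then σ is uniquely determined by its constant term σ(0): in particular, if D₀σ = 0 and σ(0) = 0 then σ = 0. -/
/-! Formal differential forms with coefficients in `ℝ[[y¹,…,y^d]]`, encoded by their
coefficients: the component at `(S, a)` is the coefficient of `y^a dx^S`. -/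

/-- The space `Ω` of formal differential forms. -/
abbrev FormalForm (d : ℕ) := Finset (Fin d) → (Fin d →₀ ℕ) → ℝ

/-- Koszul sign `(-1)^{#{s ∈ S : s < i}}`. -/
noncomputable def ksgn {d : ℕ} (S : Finset (Fin d)) (i : Fin d) : ℝ :=
  (-1 : ℝ) ^ (S.filter (fun j => j < i)).card

/-- The operator `δ = Σᵢ dxⁱ ∧ ∂/∂yⁱ`. -/
noncomputable def deltaOp {d : ℕ} (ω : FormalForm d) : FormalForm d := fun S a =>
  ∑ i ∈ S, ksgn S i * ((a i + 1 : ℕ) : ℝ) * ω (S.erase i) (a + Finsupp.single i 1)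

/-- Total degree of the monomial `y^a dx^S`, namely `|a| + #S`. -/
def totalDeg {d : ℕ} (S : Finset (Fin d)) (a : Fin d →₀ ℕ) : ℕ :=
  (a.sum fun _ n => n) + S.card

/-- The connection `D₀ = -δ + D'`. -/
noncomputable def D0 {d : ℕ} (D' : FormalForm d →ₗ[ℝ] FormalForm d)
    (ω : FormalForm d) : FormalForm d :=
  -(deltaOp ω) + D' ω

/-- A formal power series `σ ∈ 𝒜_d = ℝ[[y¹,…,y^d]]` viewed as a `0`-form. -/
def ofSeries {d : ℕ} (f : (Fin d →₀ ℕ) → ℝ) : FormalForm d :=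
  fun S a => if S = ∅ then f a else 0

private lemma deltaOp_sub {d : ℕ} (ω₁ ω₂ : FormalForm d) :
    deltaOp (ω₁ - ω₂) = deltaOp ω₁ - deltaOp ω₂ := by
  funext S a
  simp only [deltaOp, Pi.sub_apply, ← Finset.sum_sub_distrib, mul_sub]

private lemma key_lemma {d : ℕ}
    (D' : FormalForm d →ₗ[ℝ] FormalForm d)
    (htot : ∀ (m : ℕ) (ω : FormalForm d), (∀ S a, ω S a ≠ 0 → m ≤ totalDeg S a) →
      ∀ S a, D' ω S a ≠ 0 → m + 1 ≤ totalDeg S a)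
    (ρ : (Fin d →₀ ℕ) → ℝ)
    (h : D0 D' (ofSeries ρ) = 0) (h0 : ρ 0 = 0) : ρ = 0 := by
  classical
  by_contra hne
  have hx : ∃ n, ∃ a : Fin d →₀ ℕ, (a.sum fun _ n => n) = n ∧ ρ a ≠ 0 := by
    obtain ⟨a, ha⟩ := Function.ne_iff.mp hne
    exact ⟨_, a, rfl, ha⟩
  set m := Nat.find hx with hm
  obtain ⟨a, hadeg, haρ⟩ := Nat.find_spec hx
  have hlow : ∀ b : Fin d →₀ ℕ, (b.sum fun _ n => n) < m → ρ b = 0 := by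
    intro b hb
    by_contra hbρ
    exact Nat.find_min hx hb ⟨b, rfl, hbρ⟩
  have hm1 : 1 ≤ m := by
    rcases Nat.eq_zero_or_pos m with h0' | h'; swap
    · exact h'
    · exfalso
      have ha0 : a = 0 := by
        ext i
        by_cases hi : i ∈ a.support
        · have hs : ∑ j ∈ a.support, a j = 0 := hadeg.trans h0'
          have := (Finset.sum_eq_zero_iff.mp hs) i hi
          simpa using this
        · simpa using Finsupp.notMem_support_iff.mp hi
      exact haρ (ha0 ▸ h0)
  -- a ≠ 0, pick i with a i ≠ 0
  have hane : ∃ i, a i ≠ 0 := by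
    by_contra hc
    push_neg at hc
    have : a = 0 := by ext i; simp [hc i]
    rw [this] at hadeg
    simp at hadeg
    omega
  obtain ⟨i, hi⟩ := hane
  set b : Fin d →₀ ℕ := a - Finsupp.single i 1 with hb
  have hle : Finsupp.single i 1 ≤ a :=
    Finsupp.single_le_iff.mpr (Nat.one_le_iff_ne_zero.mpr hi)
  have hab : b + Finsupp.single i 1 = a := tsub_add_cancel_of_le hle
  have hbdeg : (b.sum fun _ n => n) + 1 = m := by
    have : ((b + Finsupp.single i 1).sum fun _ n => n)
        = (b.sum fun _ n => n) + ((Finsupp.single i 1).sum fun _ n => n) :=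
      Finsupp.sum_add_index' (fun _ => rfl) (fun _ _ _ => rfl)
    rw [hab, hadeg, ← hm, Finsupp.sum_single_index rfl] at this
    exact this.symm
  -- the 0-form ofSeries ρ has all monomials of total degree ≥ m
  have hbound : ∀ S c, ofSeries ρ S c ≠ 0 → m ≤ totalDeg S c := by
    intro S c hne'
    unfold ofSeries at hne'
    by_cases hS : S = ∅
    · rw [if_pos hS] at hne'
      subst hS
      simp only [totalDeg, Finset.card_empty, add_zero]
      by_contra hlt
      exact hne' (hlow c (Nat.lt_of_not_le hlt))
    · rw [if_neg hS] at hne'; exact absurd rfl hne'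
  have hD' := htot m _ hbound
  -- from D0 σ = 0 : D' (ofSeries ρ) = deltaOp (ofSeries ρ)
  have heq : ∀ S c, D' (ofSeries ρ) S c = deltaOp (ofSeries ρ) S c := by
    intro S c
    have := congrFun (congrFun h S) c
    simp only [D0, Pi.add_apply, Pi.neg_apply, Pi.zero_apply] at this
    linarith
  -- compute δ(ofSeries ρ) at ({i}, b)
  have hdelta : deltaOp (ofSeries ρ) {i} b = ((b i + 1 : ℕ) : ℝ) * ρ a := by
    unfold deltaOp
    rw [Finset.sum_singleton]
    have h1 : ksgn {i} i = 1 := by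
      unfold ksgn
      have : ({i} : Finset (Fin d)).filter (fun j => j < i) = ∅ :=
        Finset.filter_eq_empty_iff.mpr (by
          intro j hj
          simp only [Finset.mem_singleton] at hj
          subst hj
          exact lt_irrefl j)
      rw [this]; simp
    rw [h1, Finset.erase_singleton, hab]
    simp [ofSeries]
  have hne2 : deltaOp (ofSeries ρ) {i} b ≠ 0 := by
    rw [hdelta]
    apply mul_ne_zero _ haρ
    positivity
  have hne3 : D' (ofSeries ρ) {i} b ≠ 0 := by rw [heq {i} b]; exact hne2
  have hfinal := hD' {i} b hne3
  have : totalDeg ({i} : Finset (Fin d)) b = m := by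
    simp [totalDeg, hbdeg]
  omega

/-- if `D'` raises form degree by exactly `1` and total degree by at
least `1` and `D₀ = -δ + D'` satisfies `D₀² = 0`, then a `D₀`-closed `0`-form `σ` is
uniquely determined by its constant term `σ(0)`; in particular if `D₀σ = 0` and
`σ(0) = 0` then `σ = 0`. -/
theorem closed_zero_form_determined_by_constant_term (d : ℕ) (hd : 1 ≤ d)
    (D' : FormalForm d →ₗ[ℝ] FormalForm d)
    (hform : ∀ (k : ℕ) (ω : FormalForm d), (∀ S a, ω S a ≠ 0 → S.card = k) →
      ∀ S a, D' ω S a ≠ 0 → S.card = k + 1)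
    (htot : ∀ (m : ℕ) (ω : FormalForm d), (∀ S a, ω S a ≠ 0 → m ≤ totalDeg S a) →
      ∀ S a, D' ω S a ≠ 0 → m + 1 ≤ totalDeg S a)
    (hflat : ∀ ω : FormalForm d, D0 D' (D0 D' ω) = 0)
    (σ τ : (Fin d →₀ ℕ) → ℝ)
    (hσ : D0 D' (ofSeries σ) = 0) (hτ : D0 D' (ofSeries τ) = 0) :
    (σ 0 = τ 0 → σ = τ) ∧ (σ 0 = 0 → σ = 0) := by
  constructor
  · intro h0
    have hof : ofSeries (σ - τ) = ofSeries σ - ofSeries τ := by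
      funext S a
      by_cases hS : S = ∅ <;> simp [ofSeries, hS]
    have hD0 : D0 D' (ofSeries (σ - τ)) = 0 := by
      rw [hof]
      funext S c
      have h1 := congrFun (congrFun hσ S) c
      have h2 := congrFun (congrFun hτ S) c
      simp only [D0, deltaOp_sub, map_sub, Pi.add_apply, Pi.neg_apply, Pi.sub_apply,
        Pi.zero_apply] at *
      linarith
    have := key_lemma D' htot (σ - τ) hD0 (by simp [h0])
    funext a
    have := congrFun this a
    simp only [Pi.sub_apply, Pi.zero_apply] at this
    linarith
  · intro h0
    exact key_lemma D' htot σ hσ h0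
end

section
/- The Moyal product is associative: for a constant antisymmetric matrix (α^{ij})_{1≤i,j≤d} over ℝ, the ℝ[[ε]]-bilinear product ⋆ on ℝ[y¹,…,y^d][[ε]] determined by f ⋆ g = Σ_{n=0}^∞ εⁿ Bₙ(f,g) for polynomials f, g, where Bₙ(f,g) = (1/n!) Σ_{i₁,…,iₙ,j₁,…,jₙ=1}^{d} α^{i₁j₁}⋯α^{iₙjₙ} (∂_{i₁}⋯∂_{iₙ}f)(∂_{j₁}⋯∂_{jₙ}g), satisfies (F ⋆ G) ⋆ H = F ⋆ (G ⋆ H) for all F, G, H ∈ ℝ[y¹,…,y^d][[ε]]. -/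
open MvPolynomial

/-- Iterated partial derivative `∂_{i 0} ⋯ ∂_{i (n-1)} f`. -/
noncomputable def pderivMulti {d n : ℕ} (i : Fin n → Fin d)
    (f : MvPolynomial (Fin d) ℝ) : MvPolynomial (Fin d) ℝ :=
  (List.ofFn i).foldr (fun idx g => MvPolynomial.pderiv idx g) f

/-- The `n`-th Moyal bidifferential operator
`Bₙ(f,g) = (1/n!) Σ α^{i₁j₁}⋯α^{iₙjₙ} (∂_{i₁}⋯∂_{iₙ}f)(∂_{j₁}⋯∂_{jₙ}g)`. -/
noncomputable def moyalB {d : ℕ} (α : Fin d → Fin d → ℝ) (n : ℕ)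
    (f g : MvPolynomial (Fin d) ℝ) : MvPolynomial (Fin d) ℝ :=
  ((n.factorial : ℝ))⁻¹ • ∑ i : Fin n → Fin d, ∑ j : Fin n → Fin d,
    (∏ k, α (i k) (j k)) • (pderivMulti i f * pderivMulti j g)

/-- The Moyal star product on `ℝ[y¹,…,y^d][[ε]]` (series encoded by their
coefficients `ℕ → ℝ[y]`): the coefficient of `εⁿ` in `F ⋆ G` is
`Σ_{a+b+c=n} B_c(F_a, G_b)`. -/
noncomputable def moyalStar {d : ℕ} (α : Fin d → Fin d → ℝ)
    (F G : ℕ → MvPolynomial (Fin d) ℝ) : ℕ → MvPolynomial (Fin d) ℝ :=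
  fun n => ∑ p ∈ Finset.HasAntidiagonal.antidiagonal n, ∑ q ∈ Finset.HasAntidiagonal.antidiagonal p.2,
    moyalB α p.1 (F q.1) (G q.2)

open Finset

theorem pderiv_comm' {R : Type*} [CommSemiring R] {σ : Type*} (i j : σ) (p : MvPolynomial σ R) :
    pderiv i (pderiv j p) = pderiv j (pderiv i p) := by
  classical
  induction p using MvPolynomial.induction_on with
  | C a => simp
  | add p q hp hq => simp [hp, hq]
  | mul_X p k h =>
    simp only [pderiv_mul, pderiv_X, map_add, h, Pi.single_apply]
    split_ifs <;> simp <;> ring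

namespace MoyalAux
variable {d : ℕ}

theorem pderivMulti_cons {n : ℕ} (x : Fin d) (i : Fin n → Fin d) (f : MvPolynomial (Fin d) ℝ) :
    pderivMulti (Fin.cons x i) f = pderiv x (pderivMulti i f) := by
  simp [pderivMulti, List.ofFn_succ]

theorem pderivMulti_add {n : ℕ} (i : Fin n → Fin d) (f g : MvPolynomial (Fin d) ℝ) :
    pderivMulti i (f + g) = pderivMulti i f + pderivMulti i g := by
  unfold pderivMulti
  induction List.ofFn i with
  | nil => rfl
  | cons a l ih => simp [ih]

theorem pderivMulti_smul {n : ℕ} (i : Fin n → Fin d) (r : ℝ) (f : MvPolynomial (Fin d) ℝ) :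
    pderivMulti i (r • f) = r • pderivMulti i f := by
  unfold pderivMulti
  induction List.ofFn i with
  | nil => rfl
  | cons a l ih => simp [ih]

theorem pderivMulti_pderiv {n : ℕ} (i : Fin n → Fin d) (x : Fin d) (f : MvPolynomial (Fin d) ℝ) :
    pderivMulti i (pderiv x f) = pderiv x (pderivMulti i f) := by
  unfold pderivMulti
  induction List.ofFn i with
  | nil => rfl
  | cons a l ih => simp [ih, pderiv_comm']

theorem moyalB_zero (α : Fin d → Fin d → ℝ) (f g : MvPolynomial (Fin d) ℝ) :
    moyalB α 0 f g = f * g := by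
  simp [moyalB, pderivMulti]

theorem sum_fn_succ {M : Type*} [AddCommMonoid M] (c : ℕ) (F : (Fin (c + 1) → Fin d) → M) :
    ∑ i, F i = ∑ x : Fin d, ∑ i : Fin c → Fin d, F (Fin.cons x i) := by
  rw [← (Fin.consEquiv (fun _ : Fin (c + 1) => Fin d)).sum_comp F, Fintype.sum_prod_type]
  rfl

theorem moyalB_succ (α : Fin d → Fin d → ℝ) (c : ℕ) (f g : MvPolynomial (Fin d) ℝ) :
    moyalB α (c + 1) f g =
      ((c : ℝ) + 1)⁻¹ • ∑ i0 : Fin d, ∑ j0 : Fin d,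
        α i0 j0 • moyalB α c (pderiv i0 f) (pderiv j0 g) := by
  unfold moyalB
  rw [sum_fn_succ]
  simp_rw [sum_fn_succ, pderivMulti_cons, Fin.prod_univ_succ, Fin.cons_zero, Fin.cons_succ,
    pderivMulti_pderiv, Finset.smul_sum, smul_smul]
  refine Finset.sum_congr rfl fun x _ => ?_
  rw [Finset.sum_comm]
  refine Finset.sum_congr rfl fun y _ => Finset.sum_congr rfl fun i _ =>
    Finset.sum_congr rfl fun j _ => ?_
  congr 1
  rw [Nat.factorial_succ]
  push_cast
  rw [mul_inv]
  ring

theorem pderivMulti_zero {n : ℕ} (i : Fin n → Fin d) : pderivMulti i (0 : MvPolynomial (Fin d) ℝ) = 0 := by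
  unfold pderivMulti
  induction List.ofFn i with
  | nil => rfl
  | cons a l ih => simp [ih]

theorem moyalB_smul_left (α : Fin d → Fin d → ℝ) (n : ℕ) (r : ℝ) (f g : MvPolynomial (Fin d) ℝ) :
    moyalB α n (r • f) g = r • moyalB α n f g := by
  unfold moyalB
  simp_rw [pderivMulti_smul, smul_mul_assoc, smul_smul, mul_comm _ r, ← smul_smul,
    ← Finset.smul_sum]
  rw [smul_comm]

theorem moyalB_smul_right (α : Fin d → Fin d → ℝ) (n : ℕ) (r : ℝ) (f g : MvPolynomial (Fin d) ℝ) :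
    moyalB α n f (r • g) = r • moyalB α n f g := by
  unfold moyalB
  simp_rw [pderivMulti_smul, mul_smul_comm, smul_smul, mul_comm _ r, ← smul_smul,
    ← Finset.smul_sum]
  rw [smul_comm]

theorem moyalB_add_left (α : Fin d → Fin d → ℝ) (n : ℕ) (f f' g : MvPolynomial (Fin d) ℝ) :
    moyalB α n (f + f') g = moyalB α n f g + moyalB α n f' g := by
  unfold moyalB
  simp_rw [pderivMulti_add, add_mul, smul_add, Finset.sum_add_distrib]
  rw [smul_add]

theorem moyalB_add_right (α : Fin d → Fin d → ℝ) (n : ℕ) (f g g' : MvPolynomial (Fin d) ℝ) :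
    moyalB α n f (g + g') = moyalB α n f g + moyalB α n f g' := by
  unfold moyalB
  simp_rw [pderivMulti_add, mul_add, smul_add, Finset.sum_add_distrib]
  rw [smul_add]

theorem moyalB_zero_left (α : Fin d → Fin d → ℝ) (n : ℕ) (g : MvPolynomial (Fin d) ℝ) :
    moyalB α n 0 g = 0 := by
  unfold moyalB
  simp [pderivMulti_zero]

theorem moyalB_zero_right (α : Fin d → Fin d → ℝ) (n : ℕ) (f : MvPolynomial (Fin d) ℝ) :
    moyalB α n f 0 = 0 := by
  unfold moyalB
  simp [pderivMulti_zero]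

theorem moyalB_sum_left (α : Fin d → Fin d → ℝ) (n : ℕ) {ι : Type*} (s : Finset ι)
    (f : ι → MvPolynomial (Fin d) ℝ) (g : MvPolynomial (Fin d) ℝ) :
    moyalB α n (∑ x ∈ s, f x) g = ∑ x ∈ s, moyalB α n (f x) g := by
  classical
  induction s using Finset.induction with
  | empty => simp [moyalB_zero_left]
  | insert _ _ hx ih => simp [Finset.sum_insert hx, moyalB_add_left, ih]

theorem moyalB_sum_right (α : Fin d → Fin d → ℝ) (n : ℕ) {ι : Type*} (s : Finset ι)
    (f : MvPolynomial (Fin d) ℝ) (g : ι → MvPolynomial (Fin d) ℝ) :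
    moyalB α n f (∑ x ∈ s, g x) = ∑ x ∈ s, moyalB α n f (g x) := by
  classical
  induction s using Finset.induction with
  | empty => simp [moyalB_zero_right]
  | insert _ _ hx ih => simp [Finset.sum_insert hx, moyalB_add_right, ih]

/-- The 3-component polynomial algebra. -/
abbrev A3 (d : ℕ) := MvPolynomial (Fin 3 × Fin d) ℝ

/-- Multiplication (evaluation) map. -/
noncomputable def mu : A3 d →ₐ[ℝ] MvPolynomial (Fin d) ℝ :=
  aeval (fun v => X v.2)

/-- Embedding into component `a`. -/
noncomputable def emb (a : Fin 3) : MvPolynomial (Fin d) ℝ →ₐ[ℝ] A3 d :=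
  rename (fun i => (a, i))

/-- pderiv as a linear endomorphism. -/
noncomputable def pd (v : Fin 3 × Fin d) : Module.End ℝ (A3 d) :=
  (pderiv v).toLinearMap

theorem pd_comm (v w : Fin 3 × Fin d) : Commute (pd (d := d) v) (pd w) := by
  apply LinearMap.ext; intro p
  exact pderiv_comm' v w p

@[simp] theorem mu_emb (a : Fin 3) (f : MvPolynomial (Fin d) ℝ) : mu (emb a f) = f := by
  rw [mu, emb, aeval_rename]
  exact aeval_X_left_apply f

theorem pderiv_emb (a : Fin 3) (j : Fin d) (f : MvPolynomial (Fin d) ℝ) :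
    pderiv (a, j) (emb a f) = emb a (pderiv j f) :=
  pderiv_rename (fun i i' h => by simpa using h) j f

theorem pderiv_emb_ne {a b : Fin 3} (h : b ≠ a) (j : Fin d) (f : MvPolynomial (Fin d) ℝ) :
    pderiv (b, j) (emb a f) = 0 := by
  apply pderiv_eq_zero_of_notMem_vars
  intro hmem
  have := vars_rename _ f hmem
  simp only [Finset.mem_image] at this
  obtain ⟨i, -, hi⟩ := this
  exact h (by simpa using congrArg Prod.fst hi.symm)

@[simp] theorem mu_X (v : Fin 3 × Fin d) : mu (X v) = (X v.2 : MvPolynomial (Fin d) ℝ) :=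
  aeval_X _ _

/-- Chain rule for `mu`. -/
theorem pderiv_mu (i : Fin d) (p : A3 d) :
    pderiv i (mu p) = ∑ a : Fin 3, mu (pderiv (a, i) p) := by
  classical
  induction p using MvPolynomial.induction_on with
  | C a => simp
  | add p q hp hq => simp [hp, hq, Finset.sum_add_distrib]
  | mul_X p v h =>
    obtain ⟨a, k⟩ := v
    classical
    simp only [map_mul, pderiv_mul, h, mu_X, map_add, pderiv_X, Finset.sum_add_distrib,
      Finset.sum_mul, Pi.single_apply]
    rw [Fin.sum_univ_three, Fin.sum_univ_three]
    by_cases hik : k = i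
    · subst hik
      fin_cases a <;> simp [Prod.ext_iff] <;> ring
    · simp [Prod.ext_iff, hik, Ne.symm hik]


/-- The basic bidifferential operator on the 3-component algebra. -/
noncomputable def Pop (α : Fin d → Fin d → ℝ) (a b : Fin 3) : Module.End ℝ (A3 d) :=
  ∑ i : Fin d, ∑ j : Fin d, α i j • (pd (a, i) * pd (b, j))

theorem commute_pd_Pop (v : Fin 3 × Fin d) (α : Fin d → Fin d → ℝ) (a b : Fin 3) :
    Commute (pd (d := d) v) (Pop α a b) := by
  apply Commute.sum_right; intro i _
  apply Commute.sum_right; intro j _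
  exact ((pd_comm v (a, i)).mul_right (pd_comm v (b, j))).smul_right _

theorem commute_Pop (α : Fin d → Fin d → ℝ) (a b a' b' : Fin 3) :
    Commute (Pop (d := d) α a b) (Pop α a' b') := by
  apply Commute.sum_left; intro i _
  apply Commute.sum_left; intro j _
  exact (((commute_pd_Pop _ α a' b').mul_left (commute_pd_Pop _ α a' b')).smul_left _)

theorem pd_apply (v : Fin 3 × Fin d) (x : A3 d) : pd v x = pderiv v x := rfl

theorem Pop_emb_mul (α : Fin d → Fin d → ℝ) {a b : Fin 3} (hab : a ≠ b)
    (f g : MvPolynomial (Fin d) ℝ) :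
    Pop α a b (emb a f * emb b g) =
      ∑ i : Fin d, ∑ j : Fin d, α i j • (emb (d := d) a (pderiv i f) * emb b (pderiv j g)) := by
  unfold Pop
  rw [LinearMap.sum_apply]
  refine Finset.sum_congr rfl fun i _ => ?_
  rw [LinearMap.sum_apply]
  refine Finset.sum_congr rfl fun j _ => ?_
  rw [LinearMap.smul_apply, Module.End.mul_apply]
  congr 1
  rw [pd_apply, pd_apply, pderiv_mul, pderiv_emb, pderiv_emb_ne (Ne.symm hab), zero_mul,
    zero_add, pderiv_mul, pderiv_emb, pderiv_emb_ne hab, mul_zero, add_zero]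

theorem key1 (α : Fin d → Fin d → ℝ) {a b : Fin 3} (hab : a ≠ b) (e : ℕ)
    (f g : MvPolynomial (Fin d) ℝ) :
    moyalB α e f g = ((e.factorial : ℝ))⁻¹ • mu ((Pop α a b ^ e) (emb a f * emb b g)) := by
  induction e generalizing f g with
  | zero => simp [moyalB_zero]
  | succ e ih =>
    rw [moyalB_succ, pow_succ, Module.End.mul_apply, Pop_emb_mul α hab]
    simp_rw [map_sum, map_smul, Finset.smul_sum, smul_smul, ih]
    refine Finset.sum_congr rfl fun i _ => Finset.sum_congr rfl fun j _ => ?_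
    simp only [smul_smul]
    congr 1
    rw [Nat.factorial_succ]
    push_cast
    rw [mul_inv]
    ring

theorem Pop_add_apply_mul_left (α : Fin d → Fin d → ℝ) (p : A3 d)
    (h : MvPolynomial (Fin d) ℝ) (hp : ∀ j, pderiv ((2 : Fin 3), j) p = 0) :
    (Pop α 0 2 + Pop α 1 2) (p * emb 2 h) =
      ∑ i : Fin d, ∑ j : Fin d, α i j •
        ((pderiv ((0 : Fin 3), i) p + pderiv ((1 : Fin 3), i) p) * emb 2 (pderiv j h)) := by
  rw [LinearMap.add_apply]
  unfold Pop
  simp only [LinearMap.sum_apply, LinearMap.smul_apply, Module.End.mul_apply, pd_apply]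
  rw [← Finset.sum_add_distrib]
  refine Finset.sum_congr rfl fun i _ => ?_
  rw [← Finset.sum_add_distrib]
  refine Finset.sum_congr rfl fun j _ => ?_
  rw [← smul_add]
  congr 1
  have h2 : pderiv ((2 : Fin 3), j) (p * emb 2 h) = p * emb 2 (pderiv j h) := by
    rw [pderiv_mul, hp j, zero_mul, zero_add, pderiv_emb]
  rw [h2, pderiv_mul, pderiv_mul, pderiv_emb_ne (by decide) i, mul_zero, add_zero,
    pderiv_emb_ne (by decide) i, mul_zero, add_zero, add_mul]

theorem key2L (α : Fin d → Fin d → ℝ) (c : ℕ) (p : A3 d) (h : MvPolynomial (Fin d) ℝ)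
    (hp : ∀ j, pderiv ((2 : Fin 3), j) p = 0) :
    moyalB α c (mu p) h =
      ((c.factorial : ℝ))⁻¹ • mu (((Pop α 0 2 + Pop α 1 2) ^ c) (p * emb 2 h)) := by
  induction c generalizing p h with
  | zero => simp [moyalB_zero]
  | succ c ih =>
    have hch : ∀ i : Fin d, pderiv i (mu p)
        = mu (pderiv ((0 : Fin 3), i) p + pderiv ((1 : Fin 3), i) p) := by
      intro i
      rw [pderiv_mu, Fin.sum_univ_three, hp i, map_zero, add_zero, map_add]
    rw [moyalB_succ, pow_succ, Module.End.mul_apply, Pop_add_apply_mul_left α p h hp]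
    simp_rw [map_sum, map_smul, Finset.smul_sum, smul_smul]
    refine Finset.sum_congr rfl fun i _ => Finset.sum_congr rfl fun j _ => ?_
    rw [hch i, ih _ _ (fun j' => by
      rw [map_add, pderiv_comm', pderiv_comm' ((2 : Fin 3), j') ((1 : Fin 3), i), hp j',
        map_zero, map_zero, add_zero])]
    simp only [smul_smul]
    congr 1
    rw [Nat.factorial_succ]
    push_cast
    rw [mul_inv]
    ring

theorem Pop_add_apply_mul_right (α : Fin d → Fin d → ℝ) (f : MvPolynomial (Fin d) ℝ)
    (p : A3 d) (hp : ∀ j, pderiv ((0 : Fin 3), j) p = 0) :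
    (Pop α 0 1 + Pop α 0 2) (emb 0 f * p) =
      ∑ i : Fin d, ∑ j : Fin d, α i j •
        (emb 0 (pderiv i f) * (pderiv ((1 : Fin 3), j) p + pderiv ((2 : Fin 3), j) p)) := by
  rw [LinearMap.add_apply]
  unfold Pop
  simp only [LinearMap.sum_apply, LinearMap.smul_apply, Module.End.mul_apply, pd_apply]
  rw [← Finset.sum_add_distrib]
  refine Finset.sum_congr rfl fun i _ => ?_
  rw [← Finset.sum_add_distrib]
  refine Finset.sum_congr rfl fun j _ => ?_
  rw [← smul_add]
  congr 1
  have h1 : pderiv ((1 : Fin 3), j) (emb 0 f * p) = emb 0 f * pderiv ((1 : Fin 3), j) p := by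
    rw [pderiv_mul, pderiv_emb_ne (by decide) j, zero_mul, zero_add]
  have h2 : pderiv ((2 : Fin 3), j) (emb 0 f * p) = emb 0 f * pderiv ((2 : Fin 3), j) p := by
    rw [pderiv_mul, pderiv_emb_ne (by decide) j, zero_mul, zero_add]
  rw [h1, h2, pderiv_mul, pderiv_mul, pderiv_emb,
    pderiv_comm' ((0 : Fin 3), i) ((1 : Fin 3), j) p, hp i, map_zero, mul_zero, add_zero,
    pderiv_comm' ((0 : Fin 3), i) ((2 : Fin 3), j) p, hp i, map_zero, mul_zero,
    add_zero, mul_add]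

theorem key2R (α : Fin d → Fin d → ℝ) (c : ℕ) (f : MvPolynomial (Fin d) ℝ) (p : A3 d)
    (hp : ∀ j, pderiv ((0 : Fin 3), j) p = 0) :
    moyalB α c f (mu p) =
      ((c.factorial : ℝ))⁻¹ • mu (((Pop α 0 1 + Pop α 0 2) ^ c) (emb 0 f * p)) := by
  induction c generalizing f p with
  | zero => simp [moyalB_zero]
  | succ c ih =>
    have hch : ∀ j : Fin d, pderiv j (mu p)
        = mu (pderiv ((1 : Fin 3), j) p + pderiv ((2 : Fin 3), j) p) := by
      intro j
      rw [pderiv_mu, Fin.sum_univ_three, hp j, map_zero, zero_add, map_add]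
    rw [moyalB_succ, pow_succ, Module.End.mul_apply, Pop_add_apply_mul_right α f p hp]
    simp_rw [map_sum, map_smul, Finset.smul_sum, smul_smul]
    refine Finset.sum_congr rfl fun i _ => Finset.sum_congr rfl fun j _ => ?_
    rw [hch j, ih _ _ (fun j' => by
      rw [map_add, pderiv_comm', pderiv_comm' ((0 : Fin 3), j') ((2 : Fin 3), j), hp j',
        map_zero, map_zero, add_zero])]
    simp only [smul_smul]
    congr 1
    rw [Nat.factorial_succ]
    push_cast
    rw [mul_inv]
    ring

theorem Pop_mul_apply (α : Fin d → Fin d → ℝ) (a b : Fin 3) (q : A3 d)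
    (ha : ∀ i : Fin d, pderiv (a, i) q = 0) (hb : ∀ i : Fin d, pderiv (b, i) q = 0)
    (y : A3 d) : Pop α a b (y * q) = Pop α a b y * q := by
  unfold Pop
  simp only [LinearMap.sum_apply, LinearMap.smul_apply, Module.End.mul_apply, pd_apply,
    Finset.sum_mul, smul_mul_assoc]
  refine Finset.sum_congr rfl fun i _ => Finset.sum_congr rfl fun j _ => ?_
  congr 1
  rw [pderiv_mul, hb j, mul_zero, add_zero, pderiv_mul, ha i, mul_zero, add_zero]

theorem Pop_pow_mul_apply (α : Fin d → Fin d → ℝ) (a b : Fin 3) (q : A3 d)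
    (ha : ∀ i : Fin d, pderiv (a, i) q = 0) (hb : ∀ i : Fin d, pderiv (b, i) q = 0)
    (e : ℕ) (y : A3 d) : (Pop α a b ^ e) (y * q) = (Pop α a b ^ e) y * q := by
  induction e generalizing y with
  | zero => simp
  | succ e ih =>
    rw [pow_succ, Module.End.mul_apply, Module.End.mul_apply,
      Pop_mul_apply α a b q ha hb y, ih]

theorem pderiv_emb_mul_ne {a b c : Fin 3} (hca : c ≠ a) (hcb : c ≠ b) (j : Fin d)
    (f g : MvPolynomial (Fin d) ℝ) :
    pderiv ((c : Fin 3), j) (emb a f * emb b g) = 0 := by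
  rw [pderiv_mul, pderiv_emb_ne hca, pderiv_emb_ne hcb, zero_mul, mul_zero, add_zero]

theorem commute_pow_pd (v : Fin 3 × Fin d) (α : Fin d → Fin d → ℝ) (a b : Fin 3) (e : ℕ)
    (x : A3 d) : pderiv v ((Pop α a b ^ e) x) = (Pop α a b ^ e) (pderiv v x) := by
  have h := ((commute_pd_Pop v α a b).pow_right e).eq
  calc pderiv v ((Pop α a b ^ e) x) = (pd v * Pop α a b ^ e) x := rfl
    _ = (Pop α a b ^ e * pd v) x := by rw [h]
    _ = (Pop α a b ^ e) (pderiv v x) := rfl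

theorem coreL (α : Fin d → Fin d → ℝ) (c e : ℕ) (f g h : MvPolynomial (Fin d) ℝ) :
    moyalB α c (moyalB α e f g) h =
      (((c.factorial * e.factorial : ℕ) : ℝ))⁻¹ •
        mu (((Pop α 0 2 + Pop α 1 2) ^ c)
          ((Pop α 0 1 ^ e) (emb 0 f * emb 1 g * emb 2 h))) := by
  have h01 : (0 : Fin 3) ≠ 1 := by decide
  rw [key1 α h01 e f g, moyalB_smul_left]
  have hp : ∀ j : Fin d, pderiv ((2 : Fin 3), j) ((Pop α 0 1 ^ e) (emb 0 f * emb 1 g)) = 0 := by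
    intro j
    rw [commute_pow_pd, pderiv_emb_mul_ne (by decide) (by decide), map_zero]
  rw [key2L α c _ h hp, Pop_pow_mul_apply α 0 1 (emb 2 h)
    (fun i => pderiv_emb_ne (by decide) i h) (fun i => pderiv_emb_ne (by decide) i h) e]
  rw [smul_smul]
  congr 1
  push_cast
  rw [mul_inv]
  ring

theorem coreR (α : Fin d → Fin d → ℝ) (c e : ℕ) (f g h : MvPolynomial (Fin d) ℝ) :
    moyalB α c f (moyalB α e g h) =
      (((c.factorial * e.factorial : ℕ) : ℝ))⁻¹ •
        mu (((Pop α 0 1 + Pop α 0 2) ^ c)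
          ((Pop α 1 2 ^ e) (emb 0 f * emb 1 g * emb 2 h))) := by
  have h12 : (1 : Fin 3) ≠ 2 := by decide
  rw [key1 α h12 e g h, moyalB_smul_right]
  have hp : ∀ j : Fin d, pderiv ((0 : Fin 3), j) ((Pop α 1 2 ^ e) (emb 1 g * emb 2 h)) = 0 := by
    intro j
    rw [commute_pow_pd, pderiv_emb_mul_ne (by decide) (by decide), map_zero]
  rw [key2R α c f _ hp]
  have hq : ∀ i : Fin d, pderiv ((1 : Fin 3), i) (emb (d := d) 0 f) = 0 :=
    fun i => pderiv_emb_ne (by decide) i f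
  have hq' : ∀ i : Fin d, pderiv ((2 : Fin 3), i) (emb (d := d) 0 f) = 0 :=
    fun i => pderiv_emb_ne (by decide) i f
  have hmul : emb 0 f * (Pop α 1 2 ^ e) (emb 1 g * emb 2 h)
      = (Pop α 1 2 ^ e) (emb 0 f * emb 1 g * emb 2 h) := by
    rw [mul_comm ((emb (d := d) 0) f), ← Pop_pow_mul_apply α 1 2 (emb 0 f) hq hq' e]
    congr 1
    ring
  rw [hmul, smul_smul]
  congr 1
  push_cast
  rw [mul_inv]
  ring

theorem sum_ad_pow (A B : Module.End ℝ (A3 d)) (hAB : Commute A B) (m : ℕ) (T : A3 d) :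
    ∑ p ∈ Finset.HasAntidiagonal.antidiagonal m,
        (((p.1.factorial * p.2.factorial : ℕ) : ℝ))⁻¹ • mu ((A ^ p.1) ((B ^ p.2) T))
      = ((m.factorial : ℝ))⁻¹ • mu (((A + B) ^ m) T) := by
  rw [hAB.add_pow' m]
  rw [LinearMap.sum_apply, map_sum, Finset.smul_sum]
  refine Finset.sum_congr rfl fun p hp => ?_
  have hpm : p.1 + p.2 = m := Finset.HasAntidiagonal.mem_antidiagonal.mp hp
  rw [LinearMap.smul_apply, Module.End.mul_apply, map_nsmul]
  rw [← Nat.cast_smul_eq_nsmul ℝ, smul_smul]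
  congr 1
  have key : ((m.factorial : ℕ) : ℝ) = (m.choose p.1 : ℝ) * p.1.factorial * p.2.factorial := by
    rw [← hpm]
    have := (Nat.add_choose_mul_factorial_mul_factorial p.2 p.1).symm
    rw [Nat.add_comm p.2 p.1] at this
    push_cast [this]
    ring
  have h1 : (p.1.factorial : ℝ) ≠ 0 := Nat.cast_ne_zero.mpr p.1.factorial_ne_zero
  have h2 : (p.2.factorial : ℝ) ≠ 0 := Nat.cast_ne_zero.mpr p.2.factorial_ne_zero
  have hm : ((m.factorial : ℕ) : ℝ) ≠ 0 := Nat.cast_ne_zero.mpr m.factorial_ne_zero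
  field_simp
  rw [key]
  push_cast
  ring

theorem sumCoreL (α : Fin d → Fin d → ℝ) (m : ℕ) (f g h : MvPolynomial (Fin d) ℝ) :
    ∑ p ∈ Finset.HasAntidiagonal.antidiagonal m, moyalB α p.1 (moyalB α p.2 f g) h
      = ((m.factorial : ℝ))⁻¹ • mu (((Pop α 0 1 + Pop α 0 2 + Pop α 1 2) ^ m)
          (emb 0 f * emb 1 g * emb 2 h)) := by
  have hc : Commute (Pop (d := d) α 0 2 + Pop α 1 2) (Pop α 0 1) :=
    (commute_Pop α 0 2 0 1).add_left (commute_Pop α 1 2 0 1)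
  calc ∑ p ∈ Finset.HasAntidiagonal.antidiagonal m, moyalB α p.1 (moyalB α p.2 f g) h
      = ∑ p ∈ Finset.HasAntidiagonal.antidiagonal m, (((p.1.factorial * p.2.factorial : ℕ) : ℝ))⁻¹ •
          mu (((Pop α 0 2 + Pop α 1 2) ^ p.1)
            ((Pop α 0 1 ^ p.2) (emb 0 f * emb 1 g * emb 2 h))) :=
        Finset.sum_congr rfl fun p _ => coreL α p.1 p.2 f g h
    _ = ((m.factorial : ℝ))⁻¹ • mu ((((Pop α 0 2 + Pop α 1 2) + Pop α 0 1) ^ m)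
          (emb 0 f * emb 1 g * emb 2 h)) :=
        sum_ad_pow _ _ hc m _
    _ = _ := by
        rw [show (Pop (d := d) α 0 2 + Pop α 1 2) + Pop α 0 1
          = Pop α 0 1 + Pop α 0 2 + Pop α 1 2 from by abel]

theorem sumCoreR (α : Fin d → Fin d → ℝ) (m : ℕ) (f g h : MvPolynomial (Fin d) ℝ) :
    ∑ p ∈ Finset.HasAntidiagonal.antidiagonal m, moyalB α p.1 f (moyalB α p.2 g h)
      = ((m.factorial : ℝ))⁻¹ • mu (((Pop α 0 1 + Pop α 0 2 + Pop α 1 2) ^ m)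
          (emb 0 f * emb 1 g * emb 2 h)) := by
  have hc : Commute (Pop (d := d) α 0 1 + Pop α 0 2) (Pop α 1 2) :=
    (commute_Pop α 0 1 1 2).add_left (commute_Pop α 0 2 1 2)
  calc ∑ p ∈ Finset.HasAntidiagonal.antidiagonal m, moyalB α p.1 f (moyalB α p.2 g h)
      = ∑ p ∈ Finset.HasAntidiagonal.antidiagonal m, (((p.1.factorial * p.2.factorial : ℕ) : ℝ))⁻¹ •
          mu (((Pop α 0 1 + Pop α 0 2) ^ p.1)
            ((Pop α 1 2 ^ p.2) (emb 0 f * emb 1 g * emb 2 h))) :=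
        Finset.sum_congr rfl fun p _ => coreR α p.1 p.2 f g h
    _ = _ := sum_ad_pow _ _ hc m _

end MoyalAux


theorem sum_ad_assoc {M : Type*} [AddCommMonoid M] (n : ℕ) (f : ℕ → ℕ → ℕ → M) :
    ∑ p ∈ Finset.HasAntidiagonal.antidiagonal n, ∑ q ∈ Finset.HasAntidiagonal.antidiagonal p.1, f q.1 q.2 p.2
      = ∑ p ∈ Finset.HasAntidiagonal.antidiagonal n, ∑ q ∈ Finset.HasAntidiagonal.antidiagonal p.2, f p.1 q.1 q.2 := by
  rw [Finset.sum_sigma', Finset.sum_sigma']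
  refine Finset.sum_nbij'
    (fun x => ⟨(x.snd.1, x.snd.2 + x.fst.2), (x.snd.2, x.fst.2)⟩)
    (fun x => ⟨(x.fst.1 + x.snd.1, x.snd.2), (x.fst.1, x.snd.1)⟩) ?_ ?_ ?_ ?_ ?_ <;>
    rintro ⟨⟨a, b⟩, ⟨u, v⟩⟩ hm <;>
    simp only [Finset.mem_sigma, Finset.HasAntidiagonal.mem_antidiagonal] at hm ⊢
  · exact ⟨by omega, trivial⟩
  · exact ⟨by omega, trivial⟩
  · obtain ⟨h1, h2⟩ := hm
    subst h2
    rfl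
  · obtain ⟨h1, h2⟩ := hm
    subst h2
    rfl

theorem sum_ad_swap {M : Type*} [AddCommMonoid M] (n : ℕ) (f : ℕ → ℕ → M) :
    ∑ p ∈ Finset.HasAntidiagonal.antidiagonal n, f p.1 p.2 = ∑ p ∈ Finset.HasAntidiagonal.antidiagonal n, f p.2 p.1 := by
  rw [← Finset.HasAntidiagonal.map_swap_antidiagonal (n := n), Finset.sum_map]
  simp

namespace MoyalAux
variable {d : ℕ}

theorem lhsCAN (α : Fin d → Fin d → ℝ) (F G H : ℕ → MvPolynomial (Fin d) ℝ) (n : ℕ) :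
    moyalStar α (moyalStar α F G) H n
      = ∑ p ∈ Finset.HasAntidiagonal.antidiagonal n, ∑ r ∈ Finset.HasAntidiagonal.antidiagonal p.2,
          ∑ s ∈ Finset.HasAntidiagonal.antidiagonal r.2,
          ((p.1.factorial : ℝ))⁻¹ •
            mu (((Pop α 0 1 + Pop α 0 2 + Pop α 1 2) ^ p.1)
              (emb 0 (F r.1) * emb 1 (G s.1) * emb 2 (H s.2))) := by
  unfold moyalStar
  calc
    ∑ p ∈ Finset.HasAntidiagonal.antidiagonal n, ∑ q ∈ Finset.HasAntidiagonal.antidiagonal p.2,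
        moyalB α p.1 (∑ r ∈ Finset.HasAntidiagonal.antidiagonal q.1, ∑ s ∈ Finset.HasAntidiagonal.antidiagonal r.2,
          moyalB α r.1 (F s.1) (G s.2)) (H q.2)
        = ∑ p ∈ Finset.HasAntidiagonal.antidiagonal n, ∑ q ∈ Finset.HasAntidiagonal.antidiagonal p.2,
            ∑ r ∈ Finset.HasAntidiagonal.antidiagonal q.1, ∑ s ∈ Finset.HasAntidiagonal.antidiagonal r.2,
            moyalB α p.1 (moyalB α r.1 (F s.1) (G s.2)) (H q.2) := by
          refine Finset.sum_congr rfl fun p _ => Finset.sum_congr rfl fun q _ => ?_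
          rw [moyalB_sum_left]
          exact Finset.sum_congr rfl fun r _ => moyalB_sum_left α p.1 _ _ _
    _ = ∑ p ∈ Finset.HasAntidiagonal.antidiagonal n, ∑ q ∈ Finset.HasAntidiagonal.antidiagonal p.2,
            ∑ r ∈ Finset.HasAntidiagonal.antidiagonal q.2, ∑ s ∈ Finset.HasAntidiagonal.antidiagonal r.1,
            moyalB α p.1 (moyalB α q.1 (F s.1) (G s.2)) (H r.2) :=
          Finset.sum_congr rfl fun p _ =>
            sum_ad_assoc p.2 (fun e v k => ∑ s ∈ Finset.HasAntidiagonal.antidiagonal v,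
              moyalB α p.1 (moyalB α e (F s.1) (G s.2)) (H k))
    _ = ∑ p ∈ Finset.HasAntidiagonal.antidiagonal n, ∑ q ∈ Finset.HasAntidiagonal.antidiagonal p.1,
            ∑ r ∈ Finset.HasAntidiagonal.antidiagonal p.2, ∑ s ∈ Finset.HasAntidiagonal.antidiagonal r.1,
            moyalB α q.1 (moyalB α q.2 (F s.1) (G s.2)) (H r.2) :=
          (sum_ad_assoc n (fun c e t => ∑ r ∈ Finset.HasAntidiagonal.antidiagonal t,
            ∑ s ∈ Finset.HasAntidiagonal.antidiagonal r.1,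
            moyalB α c (moyalB α e (F s.1) (G s.2)) (H r.2))).symm
    _ = ∑ p ∈ Finset.HasAntidiagonal.antidiagonal n, ∑ r ∈ Finset.HasAntidiagonal.antidiagonal p.2,
            ∑ s ∈ Finset.HasAntidiagonal.antidiagonal r.1, ∑ q ∈ Finset.HasAntidiagonal.antidiagonal p.1,
            moyalB α q.1 (moyalB α q.2 (F s.1) (G s.2)) (H r.2) := by
          refine Finset.sum_congr rfl fun p _ => ?_
          rw [Finset.sum_comm]
          exact Finset.sum_congr rfl fun r _ => Finset.sum_comm
    _ = ∑ p ∈ Finset.HasAntidiagonal.antidiagonal n, ∑ r ∈ Finset.HasAntidiagonal.antidiagonal p.2,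
            ∑ s ∈ Finset.HasAntidiagonal.antidiagonal r.1,
            ((p.1.factorial : ℝ))⁻¹ •
              mu (((Pop α 0 1 + Pop α 0 2 + Pop α 1 2) ^ p.1)
                (emb 0 (F s.1) * emb 1 (G s.2) * emb 2 (H r.2))) :=
          Finset.sum_congr rfl fun p _ => Finset.sum_congr rfl fun r _ =>
            Finset.sum_congr rfl fun s _ => sumCoreL α p.1 (F s.1) (G s.2) (H r.2)
    _ = _ := Finset.sum_congr rfl fun p _ =>
          sum_ad_assoc p.2 (fun a b k => ((p.1.factorial : ℝ))⁻¹ •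
            mu (((Pop α 0 1 + Pop α 0 2 + Pop α 1 2) ^ p.1)
              (emb 0 (F a) * emb 1 (G b) * emb 2 (H k))))

theorem rhsCAN (α : Fin d → Fin d → ℝ) (F G H : ℕ → MvPolynomial (Fin d) ℝ) (n : ℕ) :
    moyalStar α F (moyalStar α G H) n
      = ∑ p ∈ Finset.HasAntidiagonal.antidiagonal n, ∑ r ∈ Finset.HasAntidiagonal.antidiagonal p.2,
          ∑ s ∈ Finset.HasAntidiagonal.antidiagonal r.2,
          ((p.1.factorial : ℝ))⁻¹ •
            mu (((Pop α 0 1 + Pop α 0 2 + Pop α 1 2) ^ p.1)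
              (emb 0 (F r.1) * emb 1 (G s.1) * emb 2 (H s.2))) := by
  unfold moyalStar
  calc
    ∑ p ∈ Finset.HasAntidiagonal.antidiagonal n, ∑ q ∈ Finset.HasAntidiagonal.antidiagonal p.2,
        moyalB α p.1 (F q.1) (∑ r ∈ Finset.HasAntidiagonal.antidiagonal q.2, ∑ s ∈ Finset.HasAntidiagonal.antidiagonal r.2,
          moyalB α r.1 (G s.1) (H s.2))
        = ∑ p ∈ Finset.HasAntidiagonal.antidiagonal n, ∑ q ∈ Finset.HasAntidiagonal.antidiagonal p.2,
            ∑ r ∈ Finset.HasAntidiagonal.antidiagonal q.2, ∑ s ∈ Finset.HasAntidiagonal.antidiagonal r.2,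
            moyalB α p.1 (F q.1) (moyalB α r.1 (G s.1) (H s.2)) := by
          refine Finset.sum_congr rfl fun p _ => Finset.sum_congr rfl fun q _ => ?_
          rw [moyalB_sum_right]
          exact Finset.sum_congr rfl fun r _ => moyalB_sum_right α p.1 _ _ _
    _ = ∑ p ∈ Finset.HasAntidiagonal.antidiagonal n, ∑ q ∈ Finset.HasAntidiagonal.antidiagonal p.2,
            ∑ r ∈ Finset.HasAntidiagonal.antidiagonal q.1, ∑ s ∈ Finset.HasAntidiagonal.antidiagonal q.2,
            moyalB α p.1 (F r.1) (moyalB α r.2 (G s.1) (H s.2)) :=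
          Finset.sum_congr rfl fun p _ =>
            (sum_ad_assoc p.2 (fun a e v => ∑ s ∈ Finset.HasAntidiagonal.antidiagonal v,
              moyalB α p.1 (F a) (moyalB α e (G s.1) (H s.2)))).symm
    _ = ∑ p ∈ Finset.HasAntidiagonal.antidiagonal n, ∑ q ∈ Finset.HasAntidiagonal.antidiagonal p.2,
            ∑ r ∈ Finset.HasAntidiagonal.antidiagonal q.1, ∑ s ∈ Finset.HasAntidiagonal.antidiagonal q.2,
            moyalB α p.1 (F r.2) (moyalB α r.1 (G s.1) (H s.2)) :=
          Finset.sum_congr rfl fun p _ => Finset.sum_congr rfl fun q _ =>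
            sum_ad_swap q.1 (fun x y => ∑ s ∈ Finset.HasAntidiagonal.antidiagonal q.2,
              moyalB α p.1 (F x) (moyalB α y (G s.1) (H s.2)))
    _ = ∑ p ∈ Finset.HasAntidiagonal.antidiagonal n, ∑ q ∈ Finset.HasAntidiagonal.antidiagonal p.2,
            ∑ r ∈ Finset.HasAntidiagonal.antidiagonal q.2, ∑ s ∈ Finset.HasAntidiagonal.antidiagonal r.2,
            moyalB α p.1 (F r.1) (moyalB α q.1 (G s.1) (H s.2)) :=
          Finset.sum_congr rfl fun p _ =>
            sum_ad_assoc p.2 (fun x y k => ∑ s ∈ Finset.HasAntidiagonal.antidiagonal k,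
              moyalB α p.1 (F y) (moyalB α x (G s.1) (H s.2)))
    _ = ∑ p ∈ Finset.HasAntidiagonal.antidiagonal n, ∑ q ∈ Finset.HasAntidiagonal.antidiagonal p.1,
            ∑ r ∈ Finset.HasAntidiagonal.antidiagonal p.2, ∑ s ∈ Finset.HasAntidiagonal.antidiagonal r.2,
            moyalB α q.1 (F r.1) (moyalB α q.2 (G s.1) (H s.2)) :=
          (sum_ad_assoc n (fun c e t => ∑ r ∈ Finset.HasAntidiagonal.antidiagonal t,
            ∑ s ∈ Finset.HasAntidiagonal.antidiagonal r.2,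
            moyalB α c (F r.1) (moyalB α e (G s.1) (H s.2)))).symm
    _ = ∑ p ∈ Finset.HasAntidiagonal.antidiagonal n, ∑ r ∈ Finset.HasAntidiagonal.antidiagonal p.2,
            ∑ s ∈ Finset.HasAntidiagonal.antidiagonal r.2, ∑ q ∈ Finset.HasAntidiagonal.antidiagonal p.1,
            moyalB α q.1 (F r.1) (moyalB α q.2 (G s.1) (H s.2)) := by
          refine Finset.sum_congr rfl fun p _ => ?_
          rw [Finset.sum_comm]
          exact Finset.sum_congr rfl fun r _ => Finset.sum_comm
    _ = _ :=
          Finset.sum_congr rfl fun p _ => Finset.sum_congr rfl fun r _ =>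
            Finset.sum_congr rfl fun s _ => sumCoreR α p.1 (F r.1) (G s.1) (H s.2)

end MoyalAux


/-- the Moyal product associated to a constant antisymmetric matrix
`α` is associative. -/
theorem moyal_associative (d : ℕ) (hd : 1 ≤ d) (α : Fin d → Fin d → ℝ)
    (hα : ∀ i j, α i j = - α j i)
    (F G H : ℕ → MvPolynomial (Fin d) ℝ) :
    moyalStar α (moyalStar α F G) H = moyalStar α F (moyalStar α G H) := by
  funext n
  rw [MoyalAux.lhsCAN α F G H n, MoyalAux.rhsCAN α F G H n]
end

section
/- Let R be a commutative ℝ-algebra and ⋆ an associative formal deformation of R with B₀(f,g) = fg. Then the bracket {f,g} := B₁(f,g) − B₁(g,f) is a Poisson bracket on R: it is ℝ-bilinear, antisymmetric, satisfies the Jacobi identity {f,{g,h}} + {g,{h,f}} + {h,{f,g}} = 0, and satisfies the Leibniz rule {f, gh} = {f,g}h + g{f,h} for all f, g, h ∈ R. -/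
/-- The star product on `R[[ε]]` (series encoded by their coefficients `ℕ → R`)
associated to a family of ℝ-bilinear maps `Bₙ : R × R → R`: the coefficient of
`εⁿ` in `F ⋆ G` is `Σ_{a+b+c=n} B_c(F_a, G_b)`. -/
noncomputable def starDeform {R : Type*} [CommRing R] [Algebra ℝ R]
    (B : ℕ → R →ₗ[ℝ] R →ₗ[ℝ] R) (F G : ℕ → R) : ℕ → R :=
  fun n => ∑ p ∈ Finset.HasAntidiagonal.antidiagonal n, ∑ q ∈ Finset.HasAntidiagonal.antidiagonal p.2,
    B p.1 (F q.1) (G q.2)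

section Aux
variable {R : Type*} [CommRing R] [Algebra ℝ R] (B : ℕ → R →ₗ[ℝ] R →ₗ[ℝ] R)

def deltaSer (f : R) : ℕ → R := fun n => if n = 0 then f else 0

lemma star_delta_right (F : ℕ → R) (h : R) :
    starDeform B F (deltaSer h) = fun n => ∑ p ∈ Finset.HasAntidiagonal.antidiagonal n, B p.1 (F p.2) h := by
  funext n
  unfold starDeform
  refine Finset.sum_congr rfl ?_
  rintro ⟨p1, p2⟩ _
  rw [Finset.sum_eq_single (p2, 0)]
  · simp [deltaSer]
  · rintro ⟨q1, q2⟩ hq hne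
    simp only [Finset.HasAntidiagonal.mem_antidiagonal] at hq
    have : q2 ≠ 0 := by
      intro h0; apply hne; subst h0; simp at hq; simp [hq]
    simp [deltaSer, this]
  · intro h0
    exact absurd (by simp [Finset.HasAntidiagonal.mem_antidiagonal]) h0

lemma star_delta_left (f : R) (G : ℕ → R) :
    starDeform B (deltaSer f) G = fun n => ∑ p ∈ Finset.HasAntidiagonal.antidiagonal n, B p.1 f (G p.2) := by
  funext n
  unfold starDeform
  refine Finset.sum_congr rfl ?_
  rintro ⟨p1, p2⟩ _
  rw [Finset.sum_eq_single (0, p2)]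
  · simp [deltaSer]
  · rintro ⟨q1, q2⟩ hq hne
    simp only [Finset.HasAntidiagonal.mem_antidiagonal] at hq
    have : q1 ≠ 0 := by
      intro h0; apply hne; subst h0; simp at hq; simp [hq]
    simp [deltaSer, this]
  · intro h0
    exact absurd (by simp [Finset.HasAntidiagonal.mem_antidiagonal]) h0

lemma star_delta (f g : R) :
    starDeform B (deltaSer f) (deltaSer g) = fun n => B n f g := by
  rw [star_delta_right]
  funext n
  rw [Finset.sum_eq_single (n, 0)]
  · simp [deltaSer]
  · rintro ⟨p1, p2⟩ hp hne
    simp only [Finset.HasAntidiagonal.mem_antidiagonal] at hp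
    have : p2 ≠ 0 := by
      intro h0; apply hne; subst h0; simp at hp; simp [hp]
    simp [deltaSer, this]
  · intro h0
    exact absurd (by simp [Finset.HasAntidiagonal.mem_antidiagonal]) h0

lemma assoc_n (hassoc : ∀ F G H : ℕ → R,
      starDeform B (starDeform B F G) H = starDeform B F (starDeform B G H))
    (n : ℕ) (f g h : R) :
    ∑ p ∈ Finset.HasAntidiagonal.antidiagonal n, B p.1 (B p.2 f g) h
      = ∑ p ∈ Finset.HasAntidiagonal.antidiagonal n, B p.1 f (B p.2 g h) := by
  have := congrFun (hassoc (deltaSer f) (deltaSer g) (deltaSer h)) n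
  rwa [star_delta, star_delta_right, star_delta_left, star_delta] at this

end Aux

/-- if `⋆` is an associative formal deformation of a commutative
ℝ-algebra `R` with `B₀(f,g) = fg`, then `{f,g} := B₁(f,g) - B₁(g,f)` is a Poisson
bracket: ℝ-bilinear (built into the data `B 1`), antisymmetric, satisfying the
Jacobi identity and the Leibniz rule. -/
theorem first_order_term_is_poisson_bracket {R : Type*} [CommRing R] [Algebra ℝ R]
    (B : ℕ → R →ₗ[ℝ] R →ₗ[ℝ] R)
    (hB0 : ∀ f g : R, B 0 f g = f * g)
    (hassoc : ∀ F G H : ℕ → R,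
      starDeform B (starDeform B F G) H = starDeform B F (starDeform B G H)) :
    -- ℝ-bilinearity of the bracket
    (∀ (c : ℝ) (f₁ f₂ g : R),
      (B 1 (c • f₁ + f₂) g - B 1 g (c • f₁ + f₂)) =
        c • (B 1 f₁ g - B 1 g f₁) + (B 1 f₂ g - B 1 g f₂)) ∧
    (∀ (c : ℝ) (f g₁ g₂ : R),
      (B 1 f (c • g₁ + g₂) - B 1 (c • g₁ + g₂) f) =
        c • (B 1 f g₁ - B 1 g₁ f) + (B 1 f g₂ - B 1 g₂ f)) ∧
    -- antisymmetry
    (∀ f g : R, B 1 f g - B 1 g f = -(B 1 g f - B 1 f g)) ∧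
    -- Jacobi identity
    (∀ f g h : R,
      (B 1 f (B 1 g h - B 1 h g) - B 1 (B 1 g h - B 1 h g) f) +
      (B 1 g (B 1 h f - B 1 f h) - B 1 (B 1 h f - B 1 f h) g) +
      (B 1 h (B 1 f g - B 1 g f) - B 1 (B 1 f g - B 1 g f) h) = 0) ∧
    -- Leibniz rule
    (∀ f g h : R,
      B 1 f (g * h) - B 1 (g * h) f =
        (B 1 f g - B 1 g f) * h + g * (B 1 f h - B 1 h f)) := by
  have E1 : ∀ f g h : R,
      B 1 f g * h + B 1 (f * g) h = f * B 1 g h + B 1 f (g * h) := by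
    intro f g h
    have := assoc_n B hassoc 1 f g h
    simp [Finset.Nat.sum_antidiagonal_eq_sum_range_succ_mk, Finset.sum_range_succ,
      hB0] at this
    linear_combination this
  have E2 : ∀ f g h : R,
      B 2 f g * h + B 1 (B 1 f g) h + B 2 (f * g) h
        = f * B 2 g h + B 1 f (B 1 g h) + B 2 f (g * h) := by
    intro f g h
    have := assoc_n B hassoc 2 f g h
    simp [Finset.Nat.sum_antidiagonal_eq_sum_range_succ_mk, Finset.sum_range_succ,
      hB0] at this
    linear_combination this
  refine ⟨?_, ?_, ?_, ?_, ?_⟩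
  · intro c f₁ f₂ g
    simp only [map_add, map_smul, LinearMap.add_apply, LinearMap.smul_apply, smul_sub, smul_add]
    module
  · intro c f g₁ g₂
    simp only [map_add, map_smul, LinearMap.add_apply, LinearMap.smul_apply, smul_sub, smul_add]
    module
  · intro f g; ring
  · intro f g h
    simp only [map_sub, LinearMap.sub_apply]
    linear_combination (-E2 f g h) + E2 f h g - E2 g h f + E2 g f h - E2 h f g + E2 h g f
      - congrArg (fun x => B 2 f x) (mul_comm g h)
      - congrArg (fun x => B 2 x g) (mul_comm f h)
      - congrArg (fun x => B 2 g x) (mul_comm h f)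
      - congrArg (fun x => B 2 x h) (mul_comm g f)
      - congrArg (fun x => B 2 h x) (mul_comm f g)
      - congrArg (fun x => B 2 x f) (mul_comm h g)
  · intro f g h
    linear_combination (-E1 f g h) - E1 g h f + E1 g f h
      + congrArg (fun x => B 1 x h) (mul_comm f g)
      + congrArg (fun x => B 1 g x) (mul_comm f h)
end

section
/- Existence of a quantization map: let (C•, D₀) be a cochain complex of ℝ-modules (D₀ : Cⁿ → Cⁿ⁺¹, D₀² = 0), and let dₙ : C• → C•⁺¹ (n ≥ 1) be ℝ-linear maps of degree +1 such that D̄ := D₀ + Σ_{n≥1} εⁿ dₙ, acting ε-linearly on C•[[ε]], satisfies D̄² = 0. Assume that for every ℝ-linear degree +1 map h : C• → C•⁺¹ with h∘D₀ + D₀∘h = 0 there exists an ℝ-linear degree 0 map g : C• → C• with h = g∘D₀ − D₀∘g. Then there exist ℝ-linear degree 0 maps ρₙ : C• → C• (n ≥ 1) such that ρ := id + Σ_{n≥1} εⁿ ρₙ satisfies ρ∘D₀ = D̄∘ρ on C•[[ε]]. Moreover any such ρ is bijective on C•[[ε]] and restricts to an ℝ[[ε]]-module isomorphism from (ker D₀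 ∩ C⁰)[[ε]] onto ker(D̄) ∩ C⁰[[ε]]. -/
section QuantizationMap

variable {C : ℕ → Type*} [∀ n, AddCommGroup (C n)] [∀ n, Module ℝ (C n)]

/-- The action of a series `ρ = Σ εᵃ ρₐ` of degree-`0` maps on series in
`Cⁿ[[ε]]` by convolution. -/
noncomputable def degZeroAct (ρ : ℕ → ∀ n, C n →ₗ[ℝ] C n) (n : ℕ)
    (F : ℕ → C n) : ℕ → C n :=
  fun m => ∑ p ∈ Finset.HasAntidiagonal.antidiagonal m, ρ p.2 n (F p.1)

/-- The action of a series `D̄ = Σ εᵃ dₐ` of degree-`+1` maps on series in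
`Cⁿ[[ε]]` by convolution. -/
noncomputable def degOneAct (dd : ℕ → ∀ n, C n →ₗ[ℝ] C (n + 1)) (n : ℕ)
    (F : ℕ → C n) : ℕ → C (n + 1) :=
  fun m => ∑ p ∈ Finset.HasAntidiagonal.antidiagonal m, dd p.2 n (F p.1)

open Finset
set_option linter.unusedVariables false
set_option maxHeartbeats 1000000

private noncomputable def myFix {α : Type*} (d : α) (step : ℕ → (ℕ → α) → α) : ℕ → α
  | j => step j (fun i => if h : i < j then myFix d step i else d)
termination_by j => j
decreasing_by exact h

private lemma myFix_eq {α : Type*} (d : α) (step : ℕ → (ℕ → α) → α) (j : ℕ) :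
    myFix d step j = step j (fun i => if h : i < j then myFix d step i else d) := by
  rw [myFix]

private lemma sum_antidiagonal_split {M : Type*} [AddCommMonoid M] (m : ℕ) (f : ℕ × ℕ → M) :
    ∑ p ∈ antidiagonal m, f p
      = f (m, 0) + ∑ p ∈ (antidiagonal m).filter (fun p => p.2 ≠ 0), f p := by
  classical
  rw [← Finset.sum_filter_add_sum_filter_not (antidiagonal m) (fun p => p.2 = 0) f]
  congr 1
  have h1 : (antidiagonal m).filter (fun p => p.2 = 0) = {(m, 0)} := by
    ext p
    simp only [mem_filter, Finset.HasAntidiagonal.mem_antidiagonal, mem_singleton, Prod.ext_iff]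
    omega
  rw [h1, Finset.sum_singleton]

private lemma tripleA {M : Type*} [AddCommMonoid M] (G : ℕ → ℕ → ℕ → M) (m : ℕ) :
    ∑ p ∈ antidiagonal m, ∑ q ∈ antidiagonal p.2, G p.1 q.1 q.2
      = ∑ p ∈ antidiagonal m, ∑ q ∈ antidiagonal p.1, G q.1 q.2 p.2 := by
  rw [Finset.sum_sigma', Finset.sum_sigma']
  apply Finset.sum_nbij' (i := fun x : (_ : ℕ × ℕ) × ℕ × ℕ => (⟨(x.1.1 + x.2.1, x.2.2), (x.1.1, x.2.1)⟩ : (_ : ℕ × ℕ) × ℕ × ℕ))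
    (j := fun x : (_ : ℕ × ℕ) × ℕ × ℕ => (⟨(x.2.1, x.2.2 + x.1.2), (x.2.2, x.1.2)⟩ : (_ : ℕ × ℕ) × ℕ × ℕ)) <;>
  · rintro ⟨⟨p1, p2⟩, q1, q2⟩ ha
    simp only [Finset.mem_sigma, Finset.HasAntidiagonal.mem_antidiagonal, Sigma.ext_iff, Prod.ext_iff,
      heq_eq_eq, and_true, true_and] at ha ⊢
    try omega
    try rfl

private lemma tripleB {M : Type*} [AddCommMonoid M] (G : ℕ → ℕ → ℕ → M) (m : ℕ) :
    ∑ p ∈ (antidiagonal m).filter (fun p => p.2 ≠ 0), ∑ q ∈ antidiagonal p.1, G q.1 q.2 p.2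
      = ∑ p ∈ (antidiagonal m).filter (fun p => p.2 ≠ 0),
          ∑ q ∈ (antidiagonal p.2).filter (fun q => q.2 ≠ 0), G p.1 q.1 q.2 := by
  rw [Finset.sum_sigma', Finset.sum_sigma']
  apply Finset.sum_nbij' (i := fun x : (_ : ℕ × ℕ) × ℕ × ℕ => (⟨(x.2.1, x.2.2 + x.1.2), (x.2.2, x.1.2)⟩ : (_ : ℕ × ℕ) × ℕ × ℕ))
    (j := fun x : (_ : ℕ × ℕ) × ℕ × ℕ => (⟨(x.1.1 + x.2.1, x.2.2), (x.1.1, x.2.1)⟩ : (_ : ℕ × ℕ) × ℕ × ℕ)) <;>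
  · rintro ⟨⟨p1, p2⟩, q1, q2⟩ ha
    simp only [Finset.mem_sigma, Finset.HasAntidiagonal.mem_antidiagonal, Finset.mem_filter, Sigma.ext_iff,
      Prod.ext_iff, heq_eq_eq, and_true, true_and, ne_eq] at ha ⊢
    try omega
    try rfl

open Classical in
private noncomputable def gPick (D0 : ∀ n, C n →ₗ[ℝ] C (n + 1))
    (h : ∀ n, C n →ₗ[ℝ] C (n + 1)) : ∀ n, C n →ₗ[ℝ] C n :=
  if hc : ∃ g : ∀ n, C n →ₗ[ℝ] C n, ∀ n (x : C n), h n x = g (n + 1) (D0 n x) - D0 n (g n x)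
  then hc.choose else fun n => 0

private lemma gPick_spec (D0 : ∀ n, C n →ₗ[ℝ] C (n + 1)) (h : ∀ n, C n →ₗ[ℝ] C (n + 1))
    (hc : ∃ g : ∀ n, C n →ₗ[ℝ] C n, ∀ n (x : C n), h n x = g (n + 1) (D0 n x) - D0 n (g n x)) :
    ∀ n (x : C n), h n x = gPick D0 h (n + 1) (D0 n x) - D0 n (gPick D0 h n x) := by
  simp only [gPick, dif_pos hc]
  exact hc.choose_spec

private noncomputable def stepRho (D0 : ∀ n, C n →ₗ[ℝ] C (n + 1))
    (dd : ℕ → ∀ n, C n →ₗ[ℝ] C (n + 1)) :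
    ℕ → (ℕ → ∀ n, C n →ₗ[ℝ] C n) → ∀ n, C n →ₗ[ℝ] C n
  | 0, _ => fun n => LinearMap.id
  | (j + 1), prev => gPick D0 (fun n =>
      ∑ p ∈ (antidiagonal (j + 1)).filter (fun p => p.2 ≠ 0), (dd p.2 n).comp (prev p.1 n))

private noncomputable def rhoDef (D0 : ∀ n, C n →ₗ[ℝ] C (n + 1))
    (dd : ℕ → ∀ n, C n →ₗ[ℝ] C (n + 1)) : ℕ → ∀ n, C n →ₗ[ℝ] C n :=
  myFix (fun n => 0) (stepRho D0 dd)

private lemma rhoDef_zero (D0 : ∀ n, C n →ₗ[ℝ] C (n + 1))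
    (dd : ℕ → ∀ n, C n →ₗ[ℝ] C (n + 1)) :
    rhoDef D0 dd 0 = fun n => LinearMap.id := by
  rw [rhoDef, myFix_eq]
  rfl

private lemma rhoDef_succ (D0 : ∀ n, C n →ₗ[ℝ] C (n + 1))
    (dd : ℕ → ∀ n, C n →ₗ[ℝ] C (n + 1)) (j : ℕ) :
    rhoDef D0 dd (j + 1) = gPick D0 (fun n =>
      ∑ p ∈ (antidiagonal (j + 1)).filter (fun p => p.2 ≠ 0),
        (dd p.2 n).comp (rhoDef D0 dd p.1 n)) := by
  conv_lhs => rw [rhoDef, myFix_eq]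
  show stepRho D0 dd (j + 1) _ = _
  rw [stepRho]
  apply congrArg
  funext n
  refine Finset.sum_congr rfl fun p hp => ?_
  simp only [mem_filter, Finset.HasAntidiagonal.mem_antidiagonal, ne_eq] at hp
  rw [dif_pos (show p.1 < j + 1 by omega)]
  rfl

private lemma ddsq_of (dd : ℕ → ∀ n, C n →ₗ[ℝ] C (n + 1))
    (hDbarSq : ∀ (n : ℕ) (F : ℕ → C n),
      degOneAct dd (n + 1) (degOneAct dd n F) = 0) :
    ∀ (n k : ℕ) (x : C n),
      ∑ q ∈ antidiagonal k, dd q.2 (n + 1) (dd q.1 n x) = 0 := by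
  intro n k x
  have h := congrFun (hDbarSq n (fun m => if m = 0 then x else 0)) k
  simp only [degOneAct, Pi.zero_apply] at h
  have inner : ∀ a : ℕ,
      (∑ q ∈ antidiagonal a, dd q.2 n (if q.1 = 0 then x else 0)) = dd a n x := by
    intro a
    rw [Finset.sum_eq_single_of_mem (0, a) (by simp)]
    · simp
    · rintro ⟨b1, b2⟩ hb hne
      simp only [Finset.HasAntidiagonal.mem_antidiagonal] at hb
      have hb1 : b1 ≠ 0 := by
        rintro rfl
        exact hne (by simp [← hb])
      rw [if_neg hb1, map_zero]
  simp only [inner] at h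
  exact h

private lemma rhoDef_inv (D0 : ∀ n, C n →ₗ[ℝ] C (n + 1))
    (dd : ℕ → ∀ n, C n →ₗ[ℝ] C (n + 1))
    (hdd0 : dd 0 = D0)
    (ddsq : ∀ (n k : ℕ) (x : C n),
      ∑ q ∈ antidiagonal k, dd q.2 (n + 1) (dd q.1 n x) = 0)
    (hexact : ∀ h : ∀ n, C n →ₗ[ℝ] C (n + 1),
      (∀ n (x : C n), h (n + 1) (D0 n x) + D0 (n + 1) (h n x) = 0) →
      ∃ g : ∀ n, C n →ₗ[ℝ] C n,
        ∀ n (x : C n), h n x = g (n + 1) (D0 n x) - D0 n (g n x)) :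
    ∀ (j n : ℕ) (x : C n),
      rhoDef D0 dd j (n + 1) (D0 n x)
        = ∑ q ∈ antidiagonal j, dd q.2 n (rhoDef D0 dd q.1 n x) := by
  intro j
  induction j using Nat.strong_induction_on with
  | _ j IH =>
    match j with
    | 0 =>
      intro n x
      rw [rhoDef_zero]
      simp [Finset.Nat.antidiagonal_zero, rhoDef_zero, hdd0]
    | (j + 1) =>
      set h : ∀ n, C n →ₗ[ℝ] C (n + 1) := fun n =>
        ∑ p ∈ (antidiagonal (j + 1)).filter (fun p => p.2 ≠ 0),
          (dd p.2 n).comp (rhoDef D0 dd p.1 n) with hh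
      have hρ : rhoDef D0 dd (j + 1) = gPick D0 h := rhoDef_succ D0 dd j
      have happ : ∀ n (x : C n), h n x
          = ∑ p ∈ (antidiagonal (j + 1)).filter (fun p => p.2 ≠ 0),
              dd p.2 n (rhoDef D0 dd p.1 n x) := by
        intro n x
        simp [hh, LinearMap.sum_apply, LinearMap.comp_apply]
      have hanti : ∀ n (x : C n), h (n + 1) (D0 n x) + D0 (n + 1) (h n x) = 0 := by
        intro n x
        have key := tripleB (fun a e b => dd b (n + 1) (dd e n (rhoDef D0 dd a n x))) (j + 1)
        have e1 : h (n + 1) (D0 n x)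
            = ∑ p ∈ (antidiagonal (j + 1)).filter (fun p => p.2 ≠ 0),
                ∑ q ∈ antidiagonal p.1, dd p.2 (n + 1) (dd q.2 n (rhoDef D0 dd q.1 n x)) := by
          rw [happ]
          refine Finset.sum_congr rfl fun p hp => ?_
          have hlt : p.1 < j + 1 := by
            simp only [mem_filter, Finset.HasAntidiagonal.mem_antidiagonal, ne_eq] at hp
            omega
          rw [IH p.1 hlt n x, map_sum]
        have e2 : D0 (n + 1) (h n x)
            = - ∑ p ∈ (antidiagonal (j + 1)).filter (fun p => p.2 ≠ 0),
                ∑ q ∈ (antidiagonal p.2).filter (fun q => q.2 ≠ 0),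
                  dd q.2 (n + 1) (dd q.1 n (rhoDef D0 dd p.1 n x)) := by
          rw [happ, map_sum, ← Finset.sum_neg_distrib]
          refine Finset.sum_congr rfl fun p hp => ?_
          have h0 := ddsq n p.2 (rhoDef D0 dd p.1 n x)
          rw [sum_antidiagonal_split p.2
            (fun q => dd q.2 (n + 1) (dd q.1 n (rhoDef D0 dd p.1 n x)))] at h0
          have : dd 0 (n + 1) (dd p.2 n (rhoDef D0 dd p.1 n x))
              = D0 (n + 1) (dd p.2 n (rhoDef D0 dd p.1 n x)) := by rw [hdd0]
          rw [this] at h0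
          exact eq_neg_of_add_eq_zero_left h0
        rw [e1, e2, key]
        abel
      have hspec := gPick_spec D0 h (hexact h hanti)
      intro n x
      rw [sum_antidiagonal_split (j + 1) (fun q => dd q.2 n (rhoDef D0 dd q.1 n x))]
      have hs : ∑ p ∈ (antidiagonal (j + 1)).filter (fun p => p.2 ≠ 0),
          dd p.2 n (rhoDef D0 dd p.1 n x) = h n x := (happ n x).symm
      rw [hs, hdd0, hρ, hspec n x]
      abel

private lemma series_of (D0 : ∀ n, C n →ₗ[ℝ] C (n + 1))
    (dd : ℕ → ∀ n, C n →ₗ[ℝ] C (n + 1)) (ρ : ℕ → ∀ n, C n →ₗ[ℝ] C n)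
    (hinv : ∀ (j n : ℕ) (x : C n),
      ρ j (n + 1) (D0 n x) = ∑ q ∈ antidiagonal j, dd q.2 n (ρ q.1 n x)) :
    ∀ (n : ℕ) (F : ℕ → C n),
      degZeroAct ρ (n + 1) (fun m => D0 n (F m)) = degOneAct dd n (degZeroAct ρ n F) := by
  intro n F
  funext m
  simp only [degZeroAct, degOneAct]
  calc ∑ p ∈ antidiagonal m, ρ p.2 (n + 1) (D0 n (F p.1))
      = ∑ p ∈ antidiagonal m, ∑ q ∈ antidiagonal p.2, dd q.2 n (ρ q.1 n (F p.1)) :=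
        Finset.sum_congr rfl fun p _ => hinv p.2 n (F p.1)
    _ = ∑ p ∈ antidiagonal m, ∑ q ∈ antidiagonal p.1, dd p.2 n (ρ q.2 n (F q.1)) :=
        tripleA (fun a e b => dd b n (ρ e n (F a))) m
    _ = ∑ p ∈ antidiagonal m, dd p.2 n (∑ q ∈ antidiagonal p.1, ρ q.2 n (F q.1)) := by
        exact Finset.sum_congr rfl fun p _ => (map_sum (dd p.2 n) _ _).symm

private lemma act_zero (ρ : ℕ → ∀ n, C n →ₗ[ℝ] C n)
    (hρ0 : ρ 0 = (fun n => LinearMap.id)) (n : ℕ) (F : ℕ → C n)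
    (h : ∀ m, degZeroAct ρ n F m = 0) : ∀ m, F m = 0 := by
  intro m
  induction m using Nat.strong_induction_on with
  | _ m IH =>
    have hm := h m
    simp only [degZeroAct] at hm
    rw [sum_antidiagonal_split m (fun p => ρ p.2 n (F p.1))] at hm
    have hz : ∑ p ∈ (antidiagonal m).filter (fun p => p.2 ≠ 0), ρ p.2 n (F p.1) = 0 := by
      refine Finset.sum_eq_zero fun p hp => ?_
      have : p.1 < m := by
        simp only [mem_filter, Finset.HasAntidiagonal.mem_antidiagonal, ne_eq] at hp
        omega
      rw [IH p.1 this, map_zero]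
    rw [hz, add_zero, hρ0] at hm
    simpa using hm

private lemma act_injective (ρ : ℕ → ∀ n, C n →ₗ[ℝ] C n)
    (hρ0 : ρ 0 = (fun n => LinearMap.id)) (n : ℕ) :
    Function.Injective (degZeroAct ρ n) := by
  intro F G hFG
  funext m
  have hz : ∀ m, degZeroAct ρ n (fun i => F i - G i) m = 0 := by
    intro m
    simp only [degZeroAct, map_sub]
    rw [Finset.sum_sub_distrib]
    have h1 : degZeroAct ρ n F m = degZeroAct ρ n G m := congrFun hFG m
    simp only [degZeroAct] at h1
    rw [h1, sub_self]
  have := act_zero ρ hρ0 n (fun i => F i - G i) hz m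
  exact sub_eq_zero.mp this

private lemma act_surjective (ρ : ℕ → ∀ n, C n →ₗ[ℝ] C n)
    (hρ0 : ρ 0 = (fun n => LinearMap.id)) (n : ℕ) :
    Function.Surjective (degZeroAct ρ n) := by
  intro G
  set F : ℕ → C n := myFix (0 : C n) (fun j prev =>
    G j - ∑ p ∈ (antidiagonal j).filter (fun p => p.2 ≠ 0), ρ p.2 n (prev p.1)) with hFdef
  have hF : ∀ m, F m
      = G m - ∑ p ∈ (antidiagonal m).filter (fun p => p.2 ≠ 0), ρ p.2 n (F p.1) := by
    intro m
    conv_lhs => rw [hFdef, myFix_eq]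
    congr 1
    refine Finset.sum_congr rfl fun p hp => ?_
    have : p.1 < m := by
      simp only [mem_filter, Finset.HasAntidiagonal.mem_antidiagonal, ne_eq] at hp
      omega
    show (ρ p.2 n) (if h : p.1 < m then F p.1 else 0) = (ρ p.2 n) (F p.1)
    rw [dif_pos this]
  refine ⟨F, ?_⟩
  funext m
  simp only [degZeroAct]
  rw [sum_antidiagonal_split m (fun p => ρ p.2 n (F p.1)), hρ0]
  simp only [LinearMap.id_coe, id_eq]
  rw [hF m]
  abel

/-- existence of a quantization map. Given a cochain complex
`(C•, D₀)` of ℝ-modules and a flat deformation `D̄ = D₀ + Σ_{n≥1} εⁿ dₙ` (`D̄² = 0`),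
under the stated degree-`1` cohomological triviality assumption there exist
degree-`0` maps `ρₙ` with `ρ = id + Σ_{n≥1} εⁿρₙ` satisfying `ρ∘D₀ = D̄∘ρ`; any
such `ρ` is bijective on `C•[[ε]]` and restricts to an isomorphism of
`(ker D₀ ∩ C⁰)[[ε]]` onto `ker D̄ ∩ C⁰[[ε]]`. -/
theorem quantization_map_exists
    (D0 : ∀ n, C n →ₗ[ℝ] C (n + 1))
    (hD0sq : ∀ n (x : C n), D0 (n + 1) (D0 n x) = 0)
    (dd : ℕ → ∀ n, C n →ₗ[ℝ] C (n + 1))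
    (hdd0 : dd 0 = D0)
    (hDbarSq : ∀ (n : ℕ) (F : ℕ → C n),
      degOneAct dd (n + 1) (degOneAct dd n F) = 0)
    (hexact : ∀ h : ∀ n, C n →ₗ[ℝ] C (n + 1),
      (∀ n (x : C n), h (n + 1) (D0 n x) + D0 (n + 1) (h n x) = 0) →
      ∃ g : ∀ n, C n →ₗ[ℝ] C n,
        ∀ n (x : C n), h n x = g (n + 1) (D0 n x) - D0 n (g n x)) :
    (∃ ρ : ℕ → ∀ n, C n →ₗ[ℝ] C n,
      ρ 0 = (fun n => LinearMap.id) ∧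
      ∀ (n : ℕ) (F : ℕ → C n),
        degZeroAct ρ (n + 1) (fun m => D0 n (F m)) = degOneAct dd n (degZeroAct ρ n F)) ∧
    (∀ ρ : ℕ → ∀ n, C n →ₗ[ℝ] C n,
      ρ 0 = (fun n => LinearMap.id) →
      (∀ (n : ℕ) (F : ℕ → C n),
        degZeroAct ρ (n + 1) (fun m => D0 n (F m)) = degOneAct dd n (degZeroAct ρ n F)) →
      (∀ n : ℕ, Function.Bijective (degZeroAct ρ n)) ∧
      (∀ F : ℕ → C 0, (∀ m, D0 0 (F m) = 0) ↔ degOneAct dd 0 (degZeroAct ρ 0 F) = 0)) := by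
  constructor
  · refine ⟨rhoDef D0 dd, rhoDef_zero D0 dd, ?_⟩
    exact series_of D0 dd (rhoDef D0 dd)
      (rhoDef_inv D0 dd hdd0 (ddsq_of dd hDbarSq) hexact)
  · intro ρ hρ0 hcomm
    constructor
    · exact fun n => ⟨act_injective ρ hρ0 n, act_surjective ρ hρ0 n⟩
    · intro F
      constructor
      · intro hker
        rw [← hcomm 0 F]
        funext m
        simp only [degZeroAct]
        refine Finset.sum_eq_zero fun p _ => ?_
        rw [hker p.1, map_zero]
      · intro h0 m
        have hz := hcomm 0 F
        rw [h0] at hz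
        exact act_zero ρ hρ0 1 (fun i => D0 0 (F i)) (fun i => congrFun hz i) m


end QuantizationMap
end

section
/- Existence of the Fedosov one-form γ: let B = ⊕_{n≥0} Bₙ be a graded ℝ-vector space and A = B[[ε]] an associative graded ℝ[[ε]]-algebra whose product ⋆ is ℝ[[ε]]-bilinear, given by convolution of ℝ-bilinear degree-adding maps on B. Let D = D₀ + Σ_{n≥1} εⁿ Dₙ (each Dₙ : B → B of degree +1, extended ε-linearly) be an odd derivation of degree +1 of (A, ⋆), and let F = Σ_{n≥1} εⁿ Fₙ with Fₙ ∈ B₂ be such that D²a = F⋆a − a⋆F for all a ∈ A and DF = 0. (Then automatically D₀² = 0 on B.) Assume that every b ∈ B₂ with D₀b = 0 is of the form b = D₀c for some c ∈ B₁. Then there exists γ = Σ_{n≥1} εⁿ γₙ with γₙ ∈ B₁ such that F + Dγ + γ⋆γ = 0; consequently D̄ := D + [γ,·]⋆ satisfies D̄² = 0. -/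
section Fedosov

variable {B : Type*} [AddCommGroup B] [Module ℝ B]

/-- The star product on `A = B[[ε]]` (series encoded by their coefficients
`ℕ → B`) given by convolution of a family of ℝ-bilinear maps `mₖ`: the
coefficient of `εⁿ` in `F ⋆ G` is `Σ_{a+b+k=n} mₖ(F_a, G_b)`. -/
noncomputable def starConv (m : ℕ → B →ₗ[ℝ] B →ₗ[ℝ] B) (F G : ℕ → B) : ℕ → B :=
  fun n => ∑ p ∈ Finset.HasAntidiagonal.antidiagonal n, ∑ q ∈ Finset.HasAntidiagonal.antidiagonal p.2,
    m p.1 (F q.1) (G q.2)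

/-- The operator `D = Σ εᵃ Dₐ` on series, acting by convolution. -/
noncomputable def opConv (Dops : ℕ → B →ₗ[ℝ] B) (F : ℕ → B) : ℕ → B :=
  fun n => ∑ p ∈ Finset.HasAntidiagonal.antidiagonal n, Dops p.2 (F p.1)

variable (m : ℕ → B →ₗ[ℝ] B →ₗ[ℝ] B) (Dops : ℕ → B →ₗ[ℝ] B)

lemma sC_add_left (F G H : ℕ → B) :
    starConv m (F + G) H = starConv m F H + starConv m G H := by
  funext n; simp [starConv, Finset.sum_add_distrib]

lemma sC_add_right (F G H : ℕ → B) :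
    starConv m F (G + H) = starConv m F G + starConv m F H := by
  funext n; simp [starConv, Finset.sum_add_distrib]

lemma sC_neg_left (F G : ℕ → B) : starConv m (-F) G = -starConv m F G := by
  funext n; simp [starConv, Finset.sum_neg_distrib]

lemma sC_neg_right (F G : ℕ → B) : starConv m F (-G) = -starConv m F G := by
  funext n; simp [starConv, Finset.sum_neg_distrib]

lemma sC_sub_left (F G H : ℕ → B) :
    starConv m (F - G) H = starConv m F H - starConv m G H := by
  rw [sub_eq_add_neg, sC_add_left, sC_neg_left, ← sub_eq_add_neg]

lemma sC_sub_right (F G H : ℕ → B) :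
    starConv m F (G - H) = starConv m F G - starConv m F H := by
  rw [sub_eq_add_neg, sC_add_right, sC_neg_right, ← sub_eq_add_neg]

lemma sC_smul_left (c : ℝ) (F G : ℕ → B) :
    starConv m (c • F) G = c • starConv m F G := by
  funext n; simp [starConv, Finset.smul_sum]

lemma sC_smul_right (c : ℝ) (F G : ℕ → B) :
    starConv m F (c • G) = c • starConv m F G := by
  funext n; simp [starConv, Finset.smul_sum]

lemma sC_zero_left (G : ℕ → B) : starConv m 0 G = 0 := by
  funext n; simp [starConv]

lemma sC_zero_right (F : ℕ → B) : starConv m F 0 = 0 := by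
  funext n; simp [starConv]

lemma oC_add (F G : ℕ → B) : opConv Dops (F + G) = opConv Dops F + opConv Dops G := by
  funext n; simp [opConv, Finset.sum_add_distrib]

lemma oC_neg (F : ℕ → B) : opConv Dops (-F) = -opConv Dops F := by
  funext n; simp [opConv, Finset.sum_neg_distrib]

lemma oC_sub (F G : ℕ → B) : opConv Dops (F - G) = opConv Dops F - opConv Dops G := by
  rw [sub_eq_add_neg, oC_add, oC_neg, ← sub_eq_add_neg]

lemma oC_smul (c : ℝ) (F : ℕ → B) : opConv Dops (c • F) = c • opConv Dops F := by
  funext n; simp [opConv, Finset.smul_sum]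

lemma oC_zero : opConv Dops 0 = 0 := by
  funext n; simp [opConv]

noncomputable def remF (Fser f : ℕ → B) : ℕ → B :=
  Fser + opConv Dops f + starConv m f f

lemma rem_congr (Fser f g : ℕ → B) (n : ℕ) (h : ∀ k ≤ n, f k = g k) :
    remF m Dops Fser f n = remF m Dops Fser g n := by
  simp only [remF, Pi.add_apply, opConv, starConv]
  congr 1
  · congr 1
    refine Finset.sum_congr rfl fun p hp => ?_
    have hps := Finset.HasAntidiagonal.mem_antidiagonal.mp hp
    rw [h p.1 (by omega)]
  · refine Finset.sum_congr rfl fun p hp => Finset.sum_congr rfl fun q hq => ?_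
    have hps := Finset.HasAntidiagonal.mem_antidiagonal.mp hp
    have hqs := Finset.HasAntidiagonal.mem_antidiagonal.mp hq
    rw [h q.1 (by omega), h q.2 (by omega)]

lemma rem_update_lt (Fser f : ℕ → B) (j n : ℕ) (hn : n < j) (c : B) :
    remF m Dops Fser (Function.update f j c) n = remF m Dops Fser f n :=
  rem_congr m Dops Fser _ _ n fun k hk => Function.update_of_ne (by omega) _ _

lemma rem_update_succ (Fser f : ℕ → B) (h0 : f 0 = 0) (N : ℕ) (hN : f (N + 1) = 0) (c : B) :
    remF m Dops Fser (Function.update f (N + 1) c) (N + 1)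
      = remF m Dops Fser f (N + 1) + Dops 0 c := by
  set g := Function.update f (N + 1) c with hg
  have hg0 : g 0 = 0 := by rw [hg, Function.update_of_ne (by omega)]; exact h0
  simp only [remF, Pi.add_apply, opConv, starConv]
  have hmem : ((N + 1, 0) : ℕ × ℕ) ∈ Finset.HasAntidiagonal.antidiagonal (N + 1) := by simp
  have hD : ∑ p ∈ Finset.HasAntidiagonal.antidiagonal (N + 1), Dops p.2 (g p.1)
      = (∑ p ∈ Finset.HasAntidiagonal.antidiagonal (N + 1), Dops p.2 (f p.1)) + Dops 0 c := by
    have hsub : ∑ p ∈ Finset.HasAntidiagonal.antidiagonal (N + 1), (Dops p.2 (g p.1) - Dops p.2 (f p.1))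
        = Dops 0 c := by
      rw [Finset.sum_eq_single_of_mem _ hmem]
      · rw [hg]; simp [Function.update_self, hN]
      · intro p hp hne
        have hps := Finset.HasAntidiagonal.mem_antidiagonal.mp hp
        have hp1 : p.1 ≠ N + 1 := by
          intro h; apply hne; rw [Prod.ext_iff]; constructor <;> omega
        rw [hg, Function.update_of_ne hp1, sub_self]
    rw [Finset.sum_sub_distrib] at hsub
    have := eq_add_of_sub_eq hsub
    rw [this]; abel
  have hS : ∑ p ∈ Finset.HasAntidiagonal.antidiagonal (N + 1), ∑ q ∈ Finset.HasAntidiagonal.antidiagonal p.2,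
        m p.1 (g q.1) (g q.2)
      = ∑ p ∈ Finset.HasAntidiagonal.antidiagonal (N + 1), ∑ q ∈ Finset.HasAntidiagonal.antidiagonal p.2,
        m p.1 (f q.1) (f q.2) := by
    refine Finset.sum_congr rfl fun p hp => Finset.sum_congr rfl fun q hq => ?_
    have hps := Finset.HasAntidiagonal.mem_antidiagonal.mp hp
    have hqs := Finset.HasAntidiagonal.mem_antidiagonal.mp hq
    rcases eq_or_ne q.1 (N + 1) with h1 | h1
    · have hq2 : q.2 = 0 := by omega
      simp [hq2, hg0, h0]
    · rcases eq_or_ne q.2 (N + 1) with h2 | h2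
      · have hq1 : q.1 = 0 := by omega
        simp [hq1, hg0, h0]
      · rw [hg, Function.update_of_ne h1, Function.update_of_ne h2]
  rw [hD, hS]; abel

lemma rem_mem (ℬ : ℕ → Submodule ℝ B)
    (hmdeg : ∀ (k p q : ℕ), ∀ x ∈ ℬ p, ∀ y ∈ ℬ q, m k x y ∈ ℬ (p + q))
    (hDdeg : ∀ (n p : ℕ), ∀ x ∈ ℬ p, Dops n x ∈ ℬ (p + 1))
    (Fser : ℕ → B) (hFdeg : ∀ n, Fser n ∈ ℬ 2)
    (f : ℕ → B) (hf : ∀ k, f k ∈ ℬ 1) (n : ℕ) :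
    remF m Dops Fser f n ∈ ℬ 2 := by
  simp only [remF, Pi.add_apply, opConv, starConv]
  refine Submodule.add_mem _ (Submodule.add_mem _ (hFdeg n) ?_) ?_
  · exact Submodule.sum_mem _ fun p _ => hDdeg p.2 1 _ (hf p.1)
  · refine Submodule.sum_mem _ fun p _ => Submodule.sum_mem _ fun q _ => ?_
    exact hmdeg p.1 1 1 _ (hf q.1) _ (hf q.2)

lemma obstruction
    (hassoc : ∀ F G H : ℕ → B,
      starConv m (starConv m F G) H = starConv m F (starConv m G H))
    (ℬ : ℕ → Submodule ℝ B)
    (hDderiv : ∀ (p : ℕ) (F G : ℕ → B), (∀ n, F n ∈ ℬ p) →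
      opConv Dops (starConv m F G) =
        starConv m (opConv Dops F) G + ((-1 : ℝ) ^ p) • starConv m F (opConv Dops G))
    (Fser : ℕ → B)
    (hcurv : ∀ a : ℕ → B,
      opConv Dops (opConv Dops a) = starConv m Fser a - starConv m a Fser)
    (hBianchi : opConv Dops Fser = 0)
    (f : ℕ → B) (h0 : f 0 = 0) (hf : ∀ n, f n ∈ ℬ 1) (N : ℕ)
    (hvan : ∀ k ≤ N, remF m Dops Fser f k = 0) :
    Dops 0 (remF m Dops Fser f (N + 1)) = 0 := by
  set E := remF m Dops Fser f with hE
  have hremE : E = Fser + opConv Dops f + starConv m f f := rfl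
  have hTf : opConv Dops f = E - Fser - starConv m f f := by rw [hremE]; abel
  have key : opConv Dops (starConv m f f)
      = starConv m (opConv Dops f) f - starConv m f (opConv Dops f) := by
    rw [hDderiv 1 f f hf, pow_one, neg_one_smul, ← sub_eq_add_neg]
  have hTE : opConv Dops E = starConv m E f - starConv m f E := by
    have step : opConv Dops E
        = 0 + (starConv m Fser f - starConv m f Fser) +
          ((starConv m E f - starConv m Fser f - starConv m (starConv m f f) f)
            - (starConv m f E - starConv m f Fser - starConv m f (starConv m f f))) := by
      conv_lhs => rw [hremE]
      rw [oC_add, oC_add, hBianchi, hcurv f, key, hTf, sC_sub_left, sC_sub_left,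
        sC_sub_right, sC_sub_right]
    rw [step, hassoc f f f]; abel
  have h1 := congrFun hTE (N + 1)
  have hL : opConv Dops E (N + 1) = Dops 0 (E (N + 1)) := by
    have hmem : ((N + 1, 0) : ℕ × ℕ) ∈ Finset.HasAntidiagonal.antidiagonal (N + 1) := by simp
    simp only [opConv]
    rw [Finset.sum_eq_single_of_mem _ hmem]
    intro p hp hne
    have hps := Finset.HasAntidiagonal.mem_antidiagonal.mp hp
    have hp1 : p.1 ≤ N := by
      rcases Nat.lt_or_ge p.1 (N + 1) with h | h
      · omega
      · exfalso; apply hne; rw [Prod.ext_iff]; constructor <;> omega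
    rw [hvan p.1 hp1, map_zero]
  have hR : (starConv m E f - starConv m f E) (N + 1) = 0 := by
    simp only [Pi.sub_apply, starConv]
    rw [Finset.sum_eq_zero, Finset.sum_eq_zero, sub_zero]
    · intro p hp
      refine Finset.sum_eq_zero fun q hq => ?_
      have hps := Finset.HasAntidiagonal.mem_antidiagonal.mp hp
      have hqs := Finset.HasAntidiagonal.mem_antidiagonal.mp hq
      rcases Nat.eq_zero_or_pos q.1 with h | h
      · rw [h, h0]; simp
      · have : q.2 ≤ N := by omega
        rw [hvan q.2 this]; simp
    · intro p hp
      refine Finset.sum_eq_zero fun q hq => ?_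
      have hps := Finset.HasAntidiagonal.mem_antidiagonal.mp hp
      have hqs := Finset.HasAntidiagonal.mem_antidiagonal.mp hq
      rcases Nat.eq_zero_or_pos q.2 with h | h
      · rw [h, h0]; simp
      · have : q.1 ≤ N := by omega
        rw [hvan q.1 this]; simp

  rw [hL, hR] at h1
  exact h1

lemma gamma_exists (ℬ : ℕ → Submodule ℝ B)
    (hmdeg : ∀ (k p q : ℕ), ∀ x ∈ ℬ p, ∀ y ∈ ℬ q, m k x y ∈ ℬ (p + q))
    (hassoc : ∀ F G H : ℕ → B,
      starConv m (starConv m F G) H = starConv m F (starConv m G H))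
    (hDdeg : ∀ (n p : ℕ), ∀ x ∈ ℬ p, Dops n x ∈ ℬ (p + 1))
    (hDderiv : ∀ (p : ℕ) (F G : ℕ → B), (∀ n, F n ∈ ℬ p) →
      opConv Dops (starConv m F G) =
        starConv m (opConv Dops F) G + ((-1 : ℝ) ^ p) • starConv m F (opConv Dops G))
    (Fser : ℕ → B) (hF0 : Fser 0 = 0) (hFdeg : ∀ n, Fser n ∈ ℬ 2)
    (hcurv : ∀ a : ℕ → B,
      opConv Dops (opConv Dops a) = starConv m Fser a - starConv m a Fser)
    (hBianchi : opConv Dops Fser = 0)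
    (hexact : ∀ b ∈ ℬ 2, Dops 0 b = 0 → ∃ c ∈ ℬ 1, b = Dops 0 c) :
    ∃ γ : ℕ → B, γ 0 = 0 ∧ (∀ n, γ n ∈ ℬ 1) ∧ ∀ n, remF m Dops Fser γ n = 0 := by
  classical
  let nextC : (ℕ → B) → ℕ → B := fun f N =>
    if h : ∃ c, c ∈ ℬ 1 ∧ remF m Dops Fser f (N + 1) + Dops 0 c = 0 then h.choose else 0
  let G : ℕ → ℕ → B := fun N =>
    Nat.rec (motive := fun _ => ℕ → B) (fun _ => 0)
      (fun N g => Function.update g (N + 1) (nextC g N)) N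
  have hGsucc : ∀ N, G (N + 1) = Function.update (G N) (N + 1) (nextC (G N) N) :=
    fun N => rfl
  have inv : ∀ N, (G N 0 = 0) ∧ (∀ k, G N k ∈ ℬ 1) ∧
      (∀ k ≤ N, remF m Dops Fser (G N) k = 0) ∧ (∀ k, N < k → G N k = 0) := by
    intro N
    induction N with
    | zero =>
      have hz : ∀ k, G 0 k = (0 : B) := fun _ => rfl
      refine ⟨rfl, fun k => by rw [hz]; exact (ℬ 1).zero_mem, ?_, fun k hk => rfl⟩
      intro k hk
      have : k = 0 := Nat.le_zero.mp hk
      subst this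
      show (Fser + opConv Dops _ + starConv m _ _) 0 = 0
      simp [opConv, starConv, hF0, hz]
    | succ N ih =>
      obtain ⟨ih0, ih1, ihrem, ihsupp⟩ := ih
      have hb2 : remF m Dops Fser (G N) (N + 1) ∈ ℬ 2 :=
        rem_mem m Dops ℬ hmdeg hDdeg Fser hFdeg (G N) ih1 (N + 1)
      have hb0 : Dops 0 (remF m Dops Fser (G N) (N + 1)) = 0 :=
        obstruction m Dops hassoc ℬ hDderiv Fser hcurv hBianchi (G N) ih0 ih1 N ihrem
      obtain ⟨c', hc'1, hc'2⟩ := hexact _ hb2 hb0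
      have hex : ∃ c, c ∈ ℬ 1 ∧ remF m Dops Fser (G N) (N + 1) + Dops 0 c = 0 :=
        ⟨-c', (ℬ 1).neg_mem hc'1, by rw [map_neg, ← hc'2, add_neg_cancel]⟩
      have hnext : nextC (G N) N ∈ ℬ 1 ∧
          remF m Dops Fser (G N) (N + 1) + Dops 0 (nextC (G N) N) = 0 := by
        simp only [nextC, dif_pos hex]
        exact hex.choose_spec
      refine ⟨?_, ?_, ?_, ?_⟩
      · rw [hGsucc, Function.update_of_ne (by omega)]; exact ih0
      · intro k
        rw [hGsucc]
        rcases eq_or_ne k (N + 1) with rfl | h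
        · rw [Function.update_self]; exact hnext.1
        · rw [Function.update_of_ne h]; exact ih1 k
      · intro k hk
        rw [hGsucc]
        rcases Nat.lt_or_ge k (N + 1) with h | h
        · rw [rem_update_lt m Dops Fser (G N) (N + 1) k h]
          exact ihrem k (by omega)
        · have : k = N + 1 := by omega
          subst this
          rw [rem_update_succ m Dops Fser (G N) ih0 N (ihsupp (N + 1) (by omega))]
          exact hnext.2
      · intro k hk
        rw [hGsucc, Function.update_of_ne (by omega)]
        exact ihsupp k (by omega)
  have hcoh : ∀ N k, k ≤ N → G N k = G k k := by
    intro N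
    induction N with
    | zero => intro k hk; have : k = 0 := Nat.le_zero.mp hk; subst this; rfl
    | succ N ih =>
      intro k hk
      rcases Nat.lt_or_ge k (N + 1) with h | h
      · rw [hGsucc, Function.update_of_ne (by omega)]
        exact ih k (by omega)
      · have : k = N + 1 := by omega
        subst this; rfl
  refine ⟨fun n => G n n, (inv 0).1, fun n => (inv n).2.1 n, fun n => ?_⟩
  have h := (inv n).2.2.1 n le_rfl
  rw [← rem_congr m Dops Fser (G n) (fun k => G k k) n (fun k hk => hcoh n k hk)]
  exact h

/-- existence of the Fedosov one-form `γ`. Let `A = B[[ε]]` be an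
associative graded algebra over `ℝ[[ε]]` (grading `ℬ`, product `⋆` by convolution
of degree-adding bilinear maps `mₖ`), `D = D₀ + Σ_{n≥1} εⁿDₙ` an odd derivation of
degree `+1`, and `F = Σ_{n≥1} εⁿFₙ`, `Fₙ ∈ B₂`, with `D²a = F⋆a - a⋆F` and
`DF = 0`. Then automatically `D₀² = 0` on `B`; and if every `D₀`-closed element of
`B₂` is `D₀ c` for some `c ∈ B₁`, then there exists `γ = Σ_{n≥1} εⁿγₙ`, `γₙ ∈ B₁`,
with `F + Dγ + γ⋆γ = 0`; consequently `D̄ = D + [γ,·]⋆` satisfies `D̄² = 0`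
(on homogeneous elements, where the graded commutator is defined). -/
theorem fedosov_one_form_exists
    (ℬ : ℕ → Submodule ℝ B)
    (m : ℕ → B →ₗ[ℝ] B →ₗ[ℝ] B)
    (hmdeg : ∀ (k p q : ℕ), ∀ x ∈ ℬ p, ∀ y ∈ ℬ q, m k x y ∈ ℬ (p + q))
    (hassoc : ∀ F G H : ℕ → B,
      starConv m (starConv m F G) H = starConv m F (starConv m G H))
    (Dops : ℕ → B →ₗ[ℝ] B)
    (hDdeg : ∀ (n p : ℕ), ∀ x ∈ ℬ p, Dops n x ∈ ℬ (p + 1))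
    (hDderiv : ∀ (p : ℕ) (F G : ℕ → B), (∀ n, F n ∈ ℬ p) →
      opConv Dops (starConv m F G) =
        starConv m (opConv Dops F) G + ((-1 : ℝ) ^ p) • starConv m F (opConv Dops G))
    (Fser : ℕ → B) (hF0 : Fser 0 = 0) (hFdeg : ∀ n, Fser n ∈ ℬ 2)
    (hcurv : ∀ a : ℕ → B,
      opConv Dops (opConv Dops a) = starConv m Fser a - starConv m a Fser)
    (hBianchi : opConv Dops Fser = 0)
    (hexact : ∀ b ∈ ℬ 2, Dops 0 b = 0 → ∃ c ∈ ℬ 1, b = Dops 0 c) :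
    (∀ x : B, Dops 0 (Dops 0 x) = 0) ∧
    ∃ γ : ℕ → B, γ 0 = 0 ∧ (∀ n, γ n ∈ ℬ 1) ∧
      Fser + opConv Dops γ + starConv m γ γ = 0 ∧
      (∀ (p : ℕ) (a : ℕ → B), (∀ n, a n ∈ ℬ p) →
        (fun b : ℕ → B =>
            opConv Dops b + starConv m γ b - ((-1 : ℝ) ^ (p + 1)) • starConv m b γ)
          (opConv Dops a + starConv m γ a - ((-1 : ℝ) ^ p) • starConv m a γ) = 0) := by
  constructor
  · intro x
    have h := congrFun (hcurv fun _ => x) 0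
    simpa [opConv, starConv, hF0] using h
  · obtain ⟨γ, hγ0, hγ1, hγr⟩ := gamma_exists m Dops ℬ hmdeg hassoc hDdeg hDderiv
      Fser hF0 hFdeg hcurv hBianchi hexact
    have hz : Fser + opConv Dops γ + starConv m γ γ = 0 := funext fun n => hγr n
    refine ⟨γ, hγ0, hγ1, hz, ?_⟩
    intro p a ha
    have e1 := hcurv a
    have e2 : opConv Dops (starConv m γ a)
        = starConv m (opConv Dops γ) a - starConv m γ (opConv Dops a) := by
      rw [hDderiv 1 γ a hγ1, pow_one, neg_one_smul, ← sub_eq_add_neg]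
    have e3 := hDderiv p a γ ha
    have eγγ : starConv m γ γ = -(Fser + opConv Dops γ) :=
      eq_neg_of_add_eq_zero_right hz
    rcases neg_one_pow_eq_or ℝ p with hs | hs <;>
    · rw [pow_succ, hs]
      rw [hs] at e3
      simp only [oC_add, oC_sub, oC_smul, oC_neg, sC_add_left, sC_add_right, sC_sub_left,
        sC_sub_right, sC_smul_left, sC_smul_right, sC_neg_left, sC_neg_right,
        e1, e2, e3, one_smul, neg_one_smul, neg_mul, one_mul, mul_one, neg_neg,
        neg_smul, smul_neg]
      rw [hassoc γ a γ, hassoc a γ γ, ← hassoc γ γ a, eγγ]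
      simp only [oC_add, oC_sub, oC_smul, oC_neg, sC_add_left, sC_add_right, sC_sub_left,
        sC_sub_right, sC_smul_left, sC_smul_right, sC_neg_left, sC_neg_right,
        e1, e2, e3, one_smul, neg_one_smul, neg_mul, one_mul, mul_one, neg_neg,
        neg_smul, smul_neg]
      abel

end Fedosov
end
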